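/- arXiv:math/9405203 — 5 statements merged into one kernel-verified Lean document; each statement's English description precedes it below -/
import Mathlib

section
/- For the ideal B_M of meager downward-closed subsets of [ω]^ω: add(B_M) = unif(B_M) = 𝔟 and cov(B_M) = cof(B_M) = 𝔡. -/
open Set Cardinal MeasureTheory

/-- The characteristic function of a set of naturals, as a point of Cantor space `2^ω`. -/
noncomputable def chi (x : Set ℕ) : ℕ → Bool := fun n => @decide (n ∈ x) (Classical.dec _)

/-- `[ω]^ω`: the collection of infinite subsets of ω. -/
def InfSets : Set (Set ℕ) := {x : Set ℕ | x.Infinite}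

/-- `X ⊆ [ω]^ω` is downward closed for almost-inclusion `x ≤ y ↔ (x \ y).Finite`. -/
def DownClosed (X : Set (Set ℕ)) : Prop :=
  ∀ y ∈ X, ∀ x : Set ℕ, x.Infinite → (x \ y).Finite → x ∈ X

/-- `X` is meager as a subset of Cantor space `2^ω` (product topology on `ℕ → Bool`). -/
def MeagerSet (X : Set (Set ℕ)) : Prop := IsMeagre (chi '' X)

/-- A partition of ω into consecutive finite intervals `I n = [e n, e (n+1))`. -/
structure IntervalPartition where
  e : ℕ → ℕ
  zero : e 0 = 0
  mono : StrictMono e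

/-- The `n`-th interval of an interval partition. -/
def IntervalPartition.I (P : IntervalPartition) (n : ℕ) : Set ℕ :=
  Set.Ico (P.e n) (P.e (n + 1))

/-- `X ⊆ [ω]^ω` is groupwise dense: downward closed, and for every partition of ω into
finite intervals, the union of some infinitely many of the intervals belongs to `X`. -/
def GroupwiseDense (X : Set (Set ℕ)) : Prop :=
  X ⊆ InfSets ∧ DownClosed X ∧
    ∀ P : IntervalPartition, ∃ A : Set ℕ, A.Infinite ∧ (⋃ n ∈ A, P.I n) ∈ X

/-- `g` eventually majorizes `f`. -/
def EvMaj (f g : ℕ → ℕ) : Prop := ∀ᶠ k in Filter.atTop, f k ≤ g k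

/-- `M(Π)`: the infinite subsets of ω including only finitely many intervals of `Π`. -/
def MSet (P : IntervalPartition) : Set (Set ℕ) :=
  {x : Set ℕ | x.Infinite ∧ {n : ℕ | P.I n ⊆ x}.Finite}

/-- The index `n` of the interval `I n` of `P` containing `k`. -/
def idx (P : IntervalPartition) (k : ℕ) : ℕ := Nat.findGreatest (fun n => P.e n ≤ k) k

/-- `F_Π(k)`: the largest element of `I (n+2)`, where `k ∈ I n`. -/
def FPart (P : IntervalPartition) (k : ℕ) : ℕ := P.e (idx P k + 3) - 1

/-- The groupwise density number 𝔤. -/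
noncomputable def gNum : Cardinal :=
  sInf {c : Cardinal | ∃ S : Set (Set (Set ℕ)), (∀ G ∈ S, GroupwiseDense G) ∧
    #S = c ∧ InfSets ∩ ⋂₀ S = ∅}

/-- The bounding number 𝔟. -/
noncomputable def bNum : Cardinal :=
  sInf {c : Cardinal | ∃ F : Set (ℕ → ℕ), #F = c ∧ ∀ g : ℕ → ℕ, ∃ f ∈ F, ¬ EvMaj f g}

/-- The dominating number 𝔡. -/
noncomputable def dNum : Cardinal :=
  sInf {c : Cardinal | ∃ F : Set (ℕ → ℕ), #F = c ∧ ∀ g : ℕ → ℕ, ∃ f ∈ F, EvMaj g f}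

/-- `B_M`: the ideal of meager downward-closed subsets of `[ω]^ω`. -/
def BM : Set (Set (Set ℕ)) := {X : Set (Set ℕ) | X ⊆ InfSets ∧ DownClosed X ∧ MeagerSet X}

/-- `add(B_M)`. -/
noncomputable def addBM : Cardinal :=
  sInf {c : Cardinal | ∃ S : Set (Set (Set ℕ)), S ⊆ BM ∧ #S = c ∧ ⋃₀ S ∉ BM}

/-- `cov(B_M)`. -/
noncomputable def covBM : Cardinal :=
  sInf {c : Cardinal | ∃ S : Set (Set (Set ℕ)), S ⊆ BM ∧ #S = c ∧
    {x : Set ℕ | x.Infinite ∧ xᶜ.Infinite} ⊆ ⋃₀ S}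

/-- `unif(B_M)`. -/
noncomputable def unifBM : Cardinal :=
  sInf {c : Cardinal | ∃ S : Set (Set ℕ), (∀ x ∈ S, x.Infinite ∧ xᶜ.Infinite) ∧ #S = c ∧
    ∀ X ∈ BM, ¬ S ⊆ X}

/-- `cof(B_M)`. -/
noncomputable def cofBM : Cardinal :=
  sInf {c : Cardinal | ∃ C : Set (Set (Set ℕ)), C ⊆ BM ∧ #C = c ∧
    ∀ X ∈ BM, ∃ Y ∈ C, X ⊆ Y}

/-- `X ⊆ [ω]^ω` is dense: every infinite `A` has an infinite subset `B ∈ X`. -/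
def DenseM (X : Set (Set ℕ)) : Prop :=
  ∀ A : Set ℕ, A.Infinite → ∃ B ⊆ A, B.Infinite ∧ B ∈ X

/-- 𝔤′: the least number of non-meager downward-closed ideals on ω with empty intersection. -/
noncomputable def gNum' : Cardinal :=
  sInf {c : Cardinal | ∃ S : Set (Set (Set ℕ)),
    (∀ X ∈ S, X ⊆ InfSets ∧ DownClosed X ∧ (∀ x ∈ X, ∀ y ∈ X, x ∪ y ∈ X) ∧ ¬ MeagerSet X) ∧
    #S = c ∧ InfSets ∩ ⋂₀ S = ∅}

/-- The splitting number 𝔰. -/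
noncomputable def sNum : Cardinal :=
  sInf {c : Cardinal | ∃ S : Set (Set ℕ), #S = c ∧
    ∀ x : Set ℕ, x.Infinite → ∃ y ∈ S, (x ∩ y).Infinite ∧ (x \ y).Infinite}

namespace Stmt11

open Filter

/-! ### Basic partition lemmas -/

lemma le_e (P : IntervalPartition) (n : ℕ) : n ≤ P.e n := P.mono.le_apply

lemma e_idx_le (P : IntervalPartition) (k : ℕ) : P.e (idx P k) ≤ k := by
  have h0 : (fun n => P.e n ≤ k) 0 := by simp [P.zero]
  unfold idx
  exact Nat.findGreatest_spec (P := fun n => P.e n ≤ k) (n := k) (Nat.zero_le k) h0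

lemma lt_e_idx (P : IntervalPartition) (k : ℕ) : k < P.e (idx P k + 1) := by
  by_contra h
  push_neg at h
  have h2 : idx P k + 1 ≤ k := le_trans (le_e P _) h
  exact Nat.findGreatest_is_greatest (P := fun n => P.e n ≤ k) (Nat.lt_succ_self _) h2 h

lemma mem_I_idx (P : IntervalPartition) (k : ℕ) : k ∈ P.I (idx P k) :=
  ⟨e_idx_le P k, lt_e_idx P k⟩

lemma le_idx (P : IntervalPartition) {m k : ℕ} (h : P.e m ≤ k) : m ≤ idx P k :=
  Nat.le_findGreatest (P := fun n => P.e n ≤ k) (le_trans (le_e P m) h) h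

lemma idx_lt (P : IntervalPartition) {m k : ℕ} (h : k < P.e m) : idx P k < m := by
  by_contra hc
  push_neg at hc
  exact absurd (lt_of_le_of_lt (e_idx_le P k) h) (not_lt.2 (P.mono.monotone hc))

lemma idx_unique (P : IntervalPartition) {n k : ℕ} (h : k ∈ P.I n) : idx P k = n := by
  obtain ⟨h1, h2⟩ := h
  have := le_idx P h1
  have := idx_lt P h2
  omega

lemma I_nonempty (P : IntervalPartition) (n : ℕ) : P.e n ∈ P.I n :=
  ⟨le_rfl, P.mono (Nat.lt_succ_self n)⟩

lemma I_disj (P : IntervalPartition) {m n k : ℕ} (hm : k ∈ P.I m) (hn : k ∈ P.I n) : m = n := by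
  rw [← idx_unique P hm, ← idx_unique P hn]

/-! ### Building partitions from functions -/

/-- monotone majorant -/
def upmax (f : ℕ → ℕ) (k : ℕ) : ℕ := Finset.sup (Finset.range (k + 1)) f

lemma le_upmax (f : ℕ → ℕ) {j k : ℕ} (h : j ≤ k) : f j ≤ upmax f k :=
  Finset.le_sup (by simp [Finset.mem_range]; omega)

def seqOf (f : ℕ → ℕ) : ℕ → ℕ
  | 0 => 0
  | n + 1 => max (seqOf f n + 2) (upmax f (seqOf f n) + 1)

lemma seqOf_add_two (f : ℕ → ℕ) (n : ℕ) : seqOf f n + 2 ≤ seqOf f (n + 1) :=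
  le_max_left _ _

lemma seqOf_gt (f : ℕ → ℕ) (n : ℕ) {k : ℕ} (h : k ≤ seqOf f n) : f k < seqOf f (n + 1) :=
  lt_of_le_of_lt (le_upmax f h)
    (lt_of_lt_of_le (Nat.lt_succ_self _) (le_max_right _ _))

/-- partition built from a function -/
def mkPart (f : ℕ → ℕ) : IntervalPartition :=
  ⟨seqOf f, rfl, strictMono_nat_of_lt_succ fun n => by have := seqOf_add_two f n; omega⟩

lemma mkPart_e (f : ℕ → ℕ) (n : ℕ) : (mkPart f).e n = seqOf f n := rfl

lemma mkPart_gt (f : ℕ → ℕ) (n : ℕ) {k : ℕ} (h : k ≤ (mkPart f).e n) :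
    f k < (mkPart f).e (n + 1) := seqOf_gt f n h

lemma mkPart_add_two (f : ℕ → ℕ) (n : ℕ) : (mkPart f).e n + 2 ≤ (mkPart f).e (n + 1) :=
  seqOf_add_two f n

/-! ### crude infinity lemmas -/

lemma infinite_of_unbounded {s : Set ℕ} (h : ∀ B : ℕ, ∃ m, B ≤ m ∧ m ∈ s) : s.Infinite := by
  intro hf
  obtain ⟨u, hu⟩ := hf.bddAbove
  obtain ⟨m, hm, hms⟩ := h (u + 1)
  exact absurd (hu hms) (by omega)

lemma unbounded_of_infinite {s : Set ℕ} (h : s.Infinite) : ∀ B : ℕ, ∃ m ∈ s, B ≤ m := by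
  intro B
  by_contra hc
  push_neg at hc
  exact h (Set.Finite.subset (Set.finite_Iio B) fun m hm => hc m hm)

end Stmt11

namespace Stmt11

/-! ### chi lemmas -/

lemma chi_eq_true {x : Set ℕ} {k : ℕ} : chi x k = true ↔ k ∈ x := by
  simp [chi]

lemma chi_eq_false {x : Set ℕ} {k : ℕ} : chi x k = false ↔ k ∉ x := by
  simp [chi]

lemma chi_setOf (z : ℕ → Bool) : chi {k | z k = true} = z := by
  funext k
  cases h : z k
  · exact chi_eq_false.mpr (by simp [h])
  · exact chi_eq_true.mpr (by simp [h])

/-! ### nowhere dense machinery -/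

lemma interior_union_empty {X : Type*} [TopologicalSpace X] {A B : Set X}
    (hA : IsClosed A) (hiA : interior A = ∅) (hiB : interior B = ∅) :
    interior (A ∪ B) = ∅ := by
  have h1 : interior (A ∪ B) ∩ Aᶜ ⊆ interior B := by
    apply interior_maximal
    · intro u hu
      rcases interior_subset hu.1 with h | h
      · exact absurd h hu.2
      · exact h
    · exact isOpen_interior.inter hA.isOpen_compl
  rw [hiB, Set.subset_empty_iff] at h1
  have h2 : interior (A ∪ B) ⊆ A := by
    intro u hu
    by_contra hc
    exact absurd (Set.mem_inter hu hc) (by rw [h1]; exact id)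
  have h3 := interior_maximal h2 isOpen_interior
  rw [hiA, Set.subset_empty_iff] at h3
  exact h3

lemma nwd_meagre {X : Type*} [TopologicalSpace X] {A : Set X} (h : IsNowhereDense A) :
    IsMeagre A :=
  isMeagre_iff_countable_union_isNowhereDense.mpr
    ⟨{A}, by simpa using h, Set.countable_singleton _, by simp⟩

/-- decomposition of a meagre set into an increasing union of closed sets with empty interior -/
lemma meagre_decomp {s : Set (ℕ → Bool)} (hs : IsMeagre s) :
    ∃ G : ℕ → Set (ℕ → Bool), (∀ m, IsClosed (G m)) ∧ (∀ m, interior (G m) = ∅) ∧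
      (∀ m n, m ≤ n → G m ⊆ G n) ∧ s ⊆ ⋃ m, G m := by
  obtain ⟨S, hnwd, hc, hsub⟩ := isMeagre_iff_countable_union_isNowhereDense.mp hs
  have hc' : (insert (∅ : Set (ℕ → Bool)) S).Countable := hc.insert ∅
  obtain ⟨F, hF⟩ := hc'.exists_eq_range (Set.insert_nonempty _ _)
  have hFn : ∀ n, IsNowhereDense (F n) := by
    intro n
    have : F n ∈ insert (∅ : Set (ℕ → Bool)) S := by rw [hF]; exact ⟨n, rfl⟩
    rcases this with h | h
    · rw [h]; exact isNowhereDense_empty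
    · exact hnwd _ h
  let G : ℕ → Set (ℕ → Bool) :=
    fun n => Nat.rec (closure (F 0)) (fun n acc => acc ∪ closure (F (n + 1))) n
  have hG0 : G 0 = closure (F 0) := rfl
  have hGsucc : ∀ n, G (n + 1) = G n ∪ closure (F (n + 1)) := fun _ => rfl
  have hclosed : ∀ n, IsClosed (G n) := by
    intro n
    induction n with
    | zero => exact isClosed_closure
    | succ n ih => rw [hGsucc]; exact ih.union isClosed_closure
  have hint : ∀ n, interior (G n) = ∅ := by
    intro n
    induction n with
    | zero => exact hFn 0
    | succ n ih => rw [hGsucc]; exact interior_union_empty (hclosed n) ih (hFn (n + 1))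
  have hmono : ∀ m n, m ≤ n → G m ⊆ G n := by
    intro m n h
    induction n with
    | zero => rw [Nat.le_zero.mp h]
    | succ n ih =>
      rcases Nat.lt_or_ge m (n + 1) with h' | h'
      · exact (ih (by omega)).trans (by rw [hGsucc]; exact Set.subset_union_left)
      · have : m = n + 1 := by omega
        rw [this]
  refine ⟨G, hclosed, hint, hmono, ?_⟩
  intro u hu
  obtain ⟨t, htS, hut⟩ := hsub hu
  have : t ∈ Set.range F := by rw [← hF]; exact Set.mem_insert_of_mem _ htS
  obtain ⟨n, rfl⟩ := this
  refine Set.mem_iUnion.mpr ⟨n, ?_⟩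
  have : closure (F n) ⊆ G n := by
    cases n with
    | zero => rw [hG0]
    | succ n => rw [hGsucc]; exact Set.subset_union_right
  exact this (subset_closure hut)

end Stmt11
namespace Stmt11

/-! ### M(P) is in BM -/

/-- closed nowhere dense pieces covering `chi '' MSet P` -/
def CSet (P : IntervalPartition) (m : ℕ) : Set (ℕ → Bool) :=
  {f | ∀ n, m ≤ n → ∃ k ∈ P.I n, f k = false}

lemma isClosed_CSet (P : IntervalPartition) (m : ℕ) : IsClosed (CSet P m) := by
  have : CSet P m = ⋂ n, ⋂ (_ : m ≤ n), ⋃ k ∈ P.I n, {f : ℕ → Bool | f k = false} := by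
    ext f; simp [CSet]
  rw [this]
  refine isClosed_iInter fun n => isClosed_iInter fun _ => ?_
  refine Set.Finite.isClosed_biUnion (Set.finite_Ico _ _) fun k _ => ?_
  have : {f : ℕ → Bool | f k = false} = (fun f : ℕ → Bool => f k) ⁻¹' {false} := rfl
  rw [this]
  exact (isClosed_discrete _).preimage (continuous_apply k)

lemma interior_CSet (P : IntervalPartition) (m : ℕ) : interior (CSet P m) = ∅ := by
  by_contra hne
  obtain ⟨f, hf⟩ := Set.nonempty_iff_ne_empty.mpr hne
  obtain ⟨I, u, hIu, hpi⟩ := isOpen_pi_iff.mp isOpen_interior f hf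
  set N := max m (I.sup id + 1) with hN
  have hiN : ∀ i ∈ I, i < P.e N := by
    intro i hi
    have h1 : i ≤ I.sup id := Finset.le_sup (f := id) hi
    have h2 : N ≤ P.e N := le_e P N
    omega
  set g : ℕ → Bool := fun k => if P.e N ≤ k ∧ k < P.e (N + 1) then true else f k with hg
  have hgpi : g ∈ (↑I : Set ℕ).pi u := by
    intro i hi
    have : g i = f i := by
      rw [hg]
      simp only []
      rw [if_neg (by have := hiN i hi; omega)]
    rw [this]
    exact (hIu i hi).2
  have hgC : g ∈ CSet P m := interior_subset (hpi hgpi)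
  obtain ⟨k, hk, hkf⟩ := hgC N (le_max_left _ _)
  have : g k = true := by rw [hg]; simp only []; rw [if_pos ⟨hk.1, hk.2⟩]
  rw [this] at hkf
  simp at hkf

lemma mset_meager (P : IntervalPartition) : MeagerSet (MSet P) := by
  have hsub : chi '' MSet P ⊆ ⋃ m, CSet P m := by
    rintro _ ⟨x, ⟨hinf, hfin⟩, rfl⟩
    obtain ⟨u, hu⟩ := hfin.bddAbove
    refine Set.mem_iUnion.mpr ⟨u + 1, fun n hn => ?_⟩
    have hnot : ¬ P.I n ⊆ x := by
      intro hsubx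
      exact absurd (hu hsubx) (by omega)
    obtain ⟨k, hkI, hkx⟩ := Set.not_subset.mp hnot
    exact ⟨k, hkI, chi_eq_false.mpr hkx⟩
  exact IsMeagre.mono hsub
    (isMeagre_iUnion fun m =>
      nwd_meagre ((isClosed_CSet P m).isNowhereDense_iff.mpr (interior_CSet P m)))

lemma mset_down (P : IntervalPartition) : DownClosed (MSet P) := by
  rintro y ⟨hyinf, hyfin⟩ x hxinf hdiff
  refine ⟨hxinf, ?_⟩
  classical
  set T := {n | (P.I n ∩ (x \ y)).Nonempty} with hT
  set φ : ℕ → ℕ := fun n => if h : (P.I n ∩ (x \ y)).Nonempty then h.choose else 0 with hφ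
  have hφmem : ∀ n ∈ T, φ n ∈ P.I n ∩ (x \ y) := by
    intro n hn
    have hn' : (P.I n ∩ (x \ y)).Nonempty := hn
    show (if h : (P.I n ∩ (x \ y)).Nonempty then Exists.choose h else 0) ∈ P.I n ∩ (x \ y)
    rw [dif_pos hn']
    exact hn'.choose_spec
  have hTfin : T.Finite := by
    refine Set.Finite.of_finite_image (f := φ) (hdiff.subset ?_) ?_
    · rintro _ ⟨n, hn, rfl⟩
      exact (hφmem n hn).2
    · intro a ha b hb hab
      exact I_disj P (hφmem a ha).1 (hab ▸ (hφmem b hb).1)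
  refine (hyfin.union hTfin).subset ?_
  intro n hn
  by_cases h : P.I n ⊆ y
  · exact Or.inl h
  · obtain ⟨k, hkI, hky⟩ := Set.not_subset.mp h
    exact Or.inr ⟨k, hkI, hn hkI, hky⟩

lemma mset_mem_BM (P : IntervalPartition) : MSet P ∈ BM :=
  ⟨fun _ hx => hx.1, mset_down P, mset_meager P⟩

end Stmt11
namespace Stmt11

/-! ### Talagrand characterization -/

lemma step_lemma (G : Set (ℕ → Bool)) (hG : IsClosed G) (hint : interior G = ∅) (N : ℕ) :
    ∃ N', N + 2 ≤ N' ∧ ∀ f : ℕ → Bool, ∃ g : ℕ → Bool,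
      (∀ k, k < N → g k = f k) ∧ (∀ k, N' ≤ k → g k = f k) ∧
      (∀ h : ℕ → Bool, (∀ k, k < N' → h k = g k) → h ∉ G) := by
  classical
  have key : ∀ σ : Fin N → Bool, ∃ (g : ℕ → Bool) (N' : ℕ), N + 2 ≤ N' ∧
      (∀ k (hk : k < N), g k = σ ⟨k, hk⟩) ∧
      (∀ h : ℕ → Bool, (∀ k, k < N' → h k = g k) → h ∉ G) := by
    intro σ
    set f0 : ℕ → Bool := fun k => if hk : k < N then σ ⟨k, hk⟩ else false with hf0
    set cyl := {h : ℕ → Bool | ∀ k, k < N → h k = f0 k} with hcyl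
    have hcylopen : IsOpen cyl := by
      have : cyl = ⋂ k ∈ Finset.range N, {h : ℕ → Bool | h k = f0 k} := by
        ext h; simp [hcyl, Finset.mem_range]
      rw [this]
      refine isOpen_biInter_finset fun k _ => ?_
      have : {h : ℕ → Bool | h k = f0 k} = (fun h : ℕ → Bool => h k) ⁻¹' {f0 k} := rfl
      rw [this]
      exact (isOpen_discrete _).preimage (continuous_apply k)
    have hne : ¬ cyl ⊆ G := by
      intro hsub
      have h1 : cyl ⊆ interior G := interior_maximal hsub hcylopen
      rw [hint] at h1
      exact h1 (show f0 ∈ cyl from fun k _ => rfl)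
    obtain ⟨g, hgcyl, hgG⟩ := Set.not_subset.mp hne
    obtain ⟨I, u, hIu, hpi⟩ := isOpen_pi_iff.mp hG.isOpen_compl g hgG
    refine ⟨g, max (N + 2) (I.sup id + 1), le_max_left _ _, ?_, ?_⟩
    · intro k hk
      have h1 : g k = f0 k := hgcyl k hk
      rw [h1, hf0]
      simp only []
      rw [dif_pos hk]
    · intro h hagree
      have hmem : h ∈ (↑I : Set ℕ).pi u := by
        intro i hi
        have hiN : i < max (N + 2) (I.sup id + 1) := by
          have := Finset.le_sup (f := id) hi
          simp only [id] at this
          omega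
        rw [hagree i hiN]
        exact (hIu i hi).2
      exact hpi hmem
  choose gf Nf hNf hσf houtf using key
  set N'' := max (N + 2) (Finset.univ.sup Nf) with hN''
  refine ⟨N'', le_max_left _ _, ?_⟩
  intro f
  set σ : Fin N → Bool := fun i => f i with hσ
  set g : ℕ → Bool := fun k => if k < N then f k else if k < Nf σ then gf σ k else f k with hg
  have hNf_le : Nf σ ≤ N'' := le_max_of_le_right (Finset.le_sup (Finset.mem_univ σ))
  refine ⟨g, fun k hk => if_pos hk, ?_, ?_⟩
  · intro k hk
    have h1 : ¬ k < N := by omega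
    have h2 : ¬ k < Nf σ := by omega
    show (if k < N then f k else if k < Nf σ then gf σ k else f k) = f k
    rw [if_neg h1, if_neg h2]
  · intro h hagree
    apply houtf σ
    intro k hk
    have hkN'' : k < N'' := lt_of_lt_of_le hk hNf_le
    rw [hagree k hkN'']
    show (if k < N then f k else if k < Nf σ then gf σ k else f k) = gf σ k
    by_cases hkN : k < N
    · rw [if_pos hkN]
      exact (hσf σ k hkN).symm
    · rw [if_neg hkN, if_pos hk]

lemma talagrand {X : Set (Set ℕ)} (hXi : X ⊆ InfSets) (hXd : DownClosed X)
    (hXm : MeagerSet X) : ∃ Q : IntervalPartition, X ⊆ MSet Q := by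
  classical
  obtain ⟨G, hGcl, hGint, hGmono, hGcov⟩ := meagre_decomp hXm
  have hstep : ∀ m N, ∃ N', N + 2 ≤ N' ∧ ∀ f : ℕ → Bool, ∃ g : ℕ → Bool,
      (∀ k, k < N → g k = f k) ∧ (∀ k, N' ≤ k → g k = f k) ∧
      (∀ h : ℕ → Bool, (∀ k, k < N' → h k = g k) → h ∉ G m) :=
    fun m N => step_lemma (G m) (hGcl m) (hGint m) N
  set E : ℕ → ℕ := fun n => Nat.rec 0 (fun m acc => (hstep m acc).choose) n with hE
  have hE0 : E 0 = 0 := rfl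
  have hEsucc : ∀ n, E (n + 1) = (hstep n (E n)).choose := fun n => rfl
  have hEgrow : ∀ n, E n + 2 ≤ E (n + 1) := fun n => by
    rw [hEsucc]; exact (hstep n (E n)).choose_spec.1
  have hesc : ∀ n (f : ℕ → Bool), ∃ g : ℕ → Bool,
      (∀ k, k < E n → g k = f k) ∧ (∀ k, E (n + 1) ≤ k → g k = f k) ∧
      (∀ h : ℕ → Bool, (∀ k, k < E (n + 1) → h k = g k) → h ∉ G n) := by
    intro n
    rw [hEsucc]
    exact (hstep n (E n)).choose_spec.2
  set Q : IntervalPartition :=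
    ⟨E, hE0, strictMono_nat_of_lt_succ fun n => by have := hEgrow n; omega⟩ with hQ
  have hQe : ∀ n, Q.e n = E n := fun n => rfl
  have hEmono : Monotone E := Q.mono.monotone
  refine ⟨Q, ?_⟩
  intro x hx
  refine ⟨hXi hx, ?_⟩
  by_contra hinf'
  have hA : {n | Q.I n ⊆ x}.Infinite := hinf'
  set pA : ℕ → Prop := fun n => Q.I n ⊆ x with hpA
  have hA' : (setOf pA).Infinite := hA
  set a : ℕ → ℕ := fun i => Nat.nth pA i with ha
  have ha_mem : ∀ i, Q.I (a i) ⊆ x := fun i => Nat.nth_mem_of_infinite hA' i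
  have ha_mono : StrictMono a := Nat.nth_strictMono hA'
  set A' : Set ℕ := Set.range (fun i => a (2 * i)) with hA'def
  set Fs : ℕ → (ℕ → Bool) :=
    fun n => Nat.rec (chi x) (fun n acc => if n ∈ A' then (hesc n acc).choose else acc) n with hFs
  have hFs0 : Fs 0 = chi x := rfl
  have hFssucc : ∀ n, Fs (n + 1) = if n ∈ A' then (hesc n (Fs n)).choose else Fs n :=
    fun n => rfl
  have hstab : ∀ j n, n ≤ j → ∀ k, k < E n → Fs j k = Fs n k := by
    intro j
    induction j with
    | zero => intro n hn k _; rw [Nat.le_zero.mp hn]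
    | succ j ih =>
      intro n hn k hk
      rcases Nat.lt_or_ge n (j + 1) with h | h
      · have hnj : n ≤ j := by omega
        rw [hFssucc j]
        by_cases hj : j ∈ A'
        · rw [if_pos hj]
          have hkE : k < E j := lt_of_lt_of_le hk (hEmono hnj)
          rw [(hesc j (Fs j)).choose_spec.1 k hkE]
          exact ih n hnj k hk
        · rw [if_neg hj]
          exact ih n hnj k hk
      · have hnn : n = j + 1 := by omega
        rw [hnn]
  set z : ℕ → Bool := fun k => Fs (idx Q k + 1) k with hzdef
  have hz_eq : ∀ n k, k < E (n + 1) → z k = Fs (n + 1) k := by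
    intro n k hk
    have h1 : idx Q k < n + 1 := idx_lt Q hk
    have h2 : k < E (idx Q k + 1) := lt_e_idx Q k
    exact (hstab (n + 1) (idx Q k + 1) (by omega) k h2).symm
  have hzG : ∀ n ∈ A', z ∉ G n := by
    intro n hn
    have h1 : Fs (n + 1) = (hesc n (Fs n)).choose := by rw [hFssucc, if_pos hn]
    apply (hesc n (Fs n)).choose_spec.2.2
    intro k hk
    rw [← h1]
    exact hz_eq n k hk
  have hzGall : ∀ m, z ∉ G m := by
    intro m hzm
    have hi : m ≤ a (2 * m) := le_trans (by omega) (ha_mono.le_apply)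
    exact hzG (a (2 * m)) ⟨m, rfl⟩ (hGmono m _ hi hzm)
  have huntouched : ∀ n, n ∉ A' → ∀ k, E n ≤ k → k < E (n + 1) → z k = chi x k := by
    intro n hn k hk1 hk2
    have hidx : idx Q k = n := idx_unique Q ⟨hk1, hk2⟩
    have hzk : z k = Fs (n + 1) k := by
      have : z k = Fs (idx Q k + 1) k := rfl
      rw [this, hidx]
    have hconst : ∀ j, j ≤ n + 1 → Fs j k = chi x k := by
      intro j
      induction j with
      | zero => intro _; rw [hFs0]
      | succ j ih =>
        intro hj
        rw [hFssucc j]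
        by_cases hjA : j ∈ A'
        · rw [if_pos hjA]
          have hjn : j < n := by
            rcases Nat.lt_or_ge j n with h | h
            · exact h
            · have : j = n := by omega
              rw [this] at hjA
              exact absurd hjA hn
          have hkE : E (j + 1) ≤ k := le_trans (hEmono hjn) hk1
          rw [(hesc j (Fs j)).choose_spec.2.1 k hkE]
          exact ih (by omega)
        · rw [if_neg hjA]
          exact ih (by omega)
    rw [hzk]
    exact hconst (n + 1) le_rfl
  set zS := {k | z k = true} with hzS
  have hchiz : chi zS = z := chi_setOf z
  have hzSx : zS ⊆ x := by
    intro k hk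
    by_cases hA'k : idx Q k ∈ A'
    · obtain ⟨i, hi⟩ := hA'k
      have hsub : Q.I (idx Q k) ⊆ x := by
        rw [← hi]
        exact ha_mem (2 * i)
      exact hsub (mem_I_idx Q k)
    · have h1 := huntouched (idx Q k) hA'k k (e_idx_le Q k) (lt_e_idx Q k)
      have h2 : chi x k = true := by rw [← h1]; exact hk
      exact chi_eq_true.mp h2
  have hzSinf : zS.Infinite := by
    have hmem : ∀ i, E (a (2 * i + 1)) ∈ zS := by
      intro i
      have hnA : a (2 * i + 1) ∉ A' := by
        rintro ⟨j, hj⟩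
        have := ha_mono.injective hj
        omega
      have h1 : z (E (a (2 * i + 1))) = chi x (E (a (2 * i + 1))) :=
        huntouched _ hnA _ le_rfl (by have := hEgrow (a (2 * i + 1)); omega)
      have h2 : E (a (2 * i + 1)) ∈ x := ha_mem (2 * i + 1) (I_nonempty Q _)
      show z (E (a (2 * i + 1))) = true
      rw [h1]
      exact chi_eq_true.mpr h2
    apply Set.infinite_of_injective_forall_mem (f := fun i : ℕ => E (a (2 * i + 1))) _ hmem
    intro i j hij
    have h1 : a (2 * i + 1) = a (2 * j + 1) := Q.mono.injective hij
    have h2 := ha_mono.injective h1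
    omega
  have hzSX : zS ∈ X := by
    apply hXd x hx zS hzSinf
    rw [Set.diff_eq_empty.mpr hzSx]
    exact Set.finite_empty
  have hchain : chi zS ∈ ⋃ m, G m := hGcov ⟨zS, hzSX, rfl⟩
  obtain ⟨m, hm⟩ := Set.mem_iUnion.mp hchain
  rw [hchiz] at hm
  exact hzGall m hm

end Stmt11
namespace Stmt11

open Filter

/-! ### combinatorial lemmas about MSet -/

lemma mset_mono {P Q : IntervalPartition} {N : ℕ}
    (h : ∀ n, N ≤ n → ∃ m, P.I m ⊆ Q.I n) : MSet P ⊆ MSet Q := by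
  classical
  rintro x ⟨hinf, hfin⟩
  refine ⟨hinf, ?_⟩
  by_contra hc
  have hQinf : {n | Q.I n ⊆ x}.Infinite := hc
  set ψ : ℕ → ℕ := fun n => if hn : N ≤ n then (h n hn).choose else 0 with hψdef
  have hψ : ∀ n, N ≤ n → P.I (ψ n) ⊆ Q.I n := by
    intro n hn
    have : ψ n = (h n hn).choose := by rw [hψdef]; simp only []; rw [dif_pos hn]
    rw [this]
    exact (h n hn).choose_spec
  have hTinf : ({n | Q.I n ⊆ x} \ Set.Iio N).Infinite := hQinf.diff (Set.finite_Iio N)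
  apply hTinf
  refine Set.Finite.of_finite_image (f := ψ) (hfin.subset ?_) ?_
  · rintro _ ⟨n, ⟨hnx, hnN⟩, rfl⟩
    have hN : N ≤ n := by simpa using hnN
    exact fun k hk => hnx (hψ n hN hk)
  · rintro a ⟨hax, haN⟩ b ⟨hbx, hbN⟩ hab
    have hNa : N ≤ a := by simpa using haN
    have hNb : N ≤ b := by simpa using hbN
    have h1 : P.e (ψ a) ∈ Q.I a := hψ a hNa (I_nonempty P (ψ a))
    have h2 : P.e (ψ a) ∈ Q.I b := by
      rw [hab]
      exact hψ b hNb (I_nonempty P (ψ b))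
    exact I_disj Q h1 h2

lemma engulf_of_evmaj (P : IntervalPartition) (g : ℕ → ℕ) {K : ℕ}
    (h : ∀ k, K ≤ k → P.e (idx P k + 3) ≤ g k) :
    ∀ n, K ≤ n → ∃ m, P.I m ⊆ (mkPart g).I n := by
  intro n hn
  have haK : K ≤ (mkPart g).e n := le_trans hn (le_e (mkPart g) n)
  refine ⟨idx P ((mkPart g).e n) + 1, ?_⟩
  intro k hk
  constructor
  · exact le_trans (le_of_lt (lt_e_idx P ((mkPart g).e n))) hk.1
  · have h1 : P.e (idx P ((mkPart g).e n) + 3) ≤ g ((mkPart g).e n) := h _ haK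
    have h2 : g ((mkPart g).e n) < (mkPart g).e (n + 1) := mkPart_gt g n le_rfl
    have h3 : P.e (idx P ((mkPart g).e n) + 2) ≤ P.e (idx P ((mkPart g).e n) + 3) :=
      P.mono.monotone (by omega)
    have h4 := hk.2
    have h5 : P.e (idx P ((mkPart g).e n) + 1 + 1) = P.e (idx P ((mkPart g).e n) + 2) := rfl
    omega

lemma mset_le_mkPart {P : IntervalPartition} {g : ℕ → ℕ}
    (h : EvMaj (fun k => P.e (idx P k + 3)) g) : MSet P ⊆ MSet (mkPart g) := by
  rw [EvMaj, Filter.eventually_atTop] at h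
  obtain ⟨K, hK⟩ := h
  exact mset_mono (engulf_of_evmaj P g hK)

lemma claimA {P Q : IntervalPartition} (h : MSet P ⊆ MSet Q) :
    ∃ N, ∀ n, N ≤ n → ∃ m, P.I m ⊆ Q.I n := by
  by_contra hcon
  push_neg at hcon
  have hcs : ∀ N, ∃ n, N ≤ n ∧ ∀ m, ¬ P.I m ⊆ Q.I n := hcon
  have hwin : ∀ n, (∀ m, ¬ P.I m ⊆ Q.I n) →
      Q.I n ⊆ Set.Ico (P.e (idx P (Q.e n))) (P.e (idx P (Q.e n) + 2)) := by
    intro n hn k hk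
    refine ⟨le_trans (e_idx_le P (Q.e n)) hk.1, ?_⟩
    by_contra hcc
    push_neg at hcc
    apply hn (idx P (Q.e n) + 1)
    intro k' hk'
    constructor
    · exact le_trans (le_of_lt (lt_e_idx P (Q.e n))) hk'.1
    · have hb1 := hk'.2
      have hb2 := hk.2
      have hb3 : P.e (idx P (Q.e n) + 1 + 1) = P.e (idx P (Q.e n) + 2) := rfl
      omega
  set ns : ℕ → ℕ := fun j => Nat.rec (hcs 0).choose
      (fun _ prev => (hcs (max (prev + 1) (P.e (idx P (Q.e prev) + 3)))).choose) j with hnsdef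
  have hns_succ : ∀ j, ns (j + 1) =
      (hcs (max (ns j + 1) (P.e (idx P (Q.e (ns j)) + 3)))).choose := fun j => rfl
  have hnsB : ∀ j, ∀ m, ¬ P.I m ⊆ Q.I (ns j) := by
    intro j
    cases j with
    | zero => exact (hcs 0).choose_spec.2
    | succ j => exact (hcs _).choose_spec.2
  have hns_lt : ∀ j, ns j < ns (j + 1) := by
    intro j
    have := (hcs (max (ns j + 1) (P.e (idx P (Q.e (ns j)) + 3)))).choose_spec.1
    rw [hns_succ]
    omega
  have hns_i : ∀ j, P.e (idx P (Q.e (ns j)) + 3) ≤ Q.e (ns (j + 1)) := by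
    intro j
    have h1 := (hcs (max (ns j + 1) (P.e (idx P (Q.e (ns j)) + 3)))).choose_spec.1
    have h2 : max (ns j + 1) (P.e (idx P (Q.e (ns j)) + 3)) ≤ ns (j + 1) := by
      rw [hns_succ]; exact h1
    exact le_trans (le_trans (le_max_right _ _) h2) (le_e Q _)
  set iF : ℕ → ℕ := fun j => idx P (Q.e (ns j)) with hiF
  have hi_step : ∀ j, iF j + 3 ≤ iF (j + 1) := fun j => le_idx P (hns_i j)
  have hi_mono : ∀ j l, j < l → iF j + 3 ≤ iF l := by
    intro j l hjl
    induction l with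
    | zero => omega
    | succ l ih =>
      rcases Nat.lt_or_ge j l with h' | h'
      · have h1 := ih h'
        have h2 := hi_step l
        omega
      · have : j = l := by omega
        rw [this]
        exact hi_step l
  set x := ⋃ j, Q.I (ns j) with hx
  have hwin' : ∀ j, Q.I (ns j) ⊆ Set.Ico (P.e (iF j)) (P.e (iF j + 2)) :=
    fun j => hwin (ns j) (hnsB j)
  have hxP : ∀ m, ¬ P.I m ⊆ x := by
    intro m hm
    have h1 : P.e m ∈ x := hm (I_nonempty P m)
    obtain ⟨j, hj⟩ : ∃ j, P.e m ∈ Q.I (ns j) := by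
      obtain ⟨s, ⟨j, rfl⟩, hs⟩ := h1
      exact ⟨j, hs⟩
    have h2 := hwin' j hj
    have h3 : iF j ≤ m := by
      have := (hwin' j hj).1
      exact (StrictMono.le_iff_le P.mono).mp this
    have h4 : m < iF j + 2 := by
      have := (hwin' j hj).2
      exact (StrictMono.lt_iff_lt P.mono).mp this
    apply hnsB j m
    intro k hk
    have hkx : k ∈ x := hm hk
    obtain ⟨l, hl⟩ : ∃ l, k ∈ Q.I (ns l) := by
      obtain ⟨s, ⟨l, rfl⟩, hs⟩ := hkx
      exact ⟨l, hs⟩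
    have hlj : l = j := by
      by_contra hlj
      rcases Nat.lt_or_ge l j with h' | h'
      · have ha1 := (hwin' l hl).2
        have ha2 : P.e (iF l + 2) ≤ P.e (iF j) := P.mono.monotone (by have := hi_mono l j h'; omega)
        have ha3 : P.e (iF j) ≤ P.e m := P.mono.monotone h3
        have := hk.1
        omega
      · have hjl : j < l := by omega
        have ha1 := (hwin' l hl).1
        have ha2 : P.e (iF j + 2) ≤ P.e (iF l) := P.mono.monotone (by have := hi_mono j l hjl; omega)
        have ha3 : P.e (m + 1) ≤ P.e (iF j + 2) := P.mono.monotone (by omega)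
        have := hk.2
        omega
    rw [hlj] at hl
    exact hl
  have hns_mono : StrictMono ns := strictMono_nat_of_lt_succ hns_lt
  have hxinf : x.Infinite := by
    apply Set.infinite_of_injective_forall_mem (f := fun j => Q.e (ns j))
    · exact fun i j hij => hns_mono.injective (Q.mono.injective hij)
    · intro j
      exact Set.mem_iUnion.mpr ⟨j, I_nonempty Q (ns j)⟩
  have hxM : x ∈ MSet P := by
    refine ⟨hxinf, ?_⟩
    have : {m | P.I m ⊆ x} = ∅ := Set.eq_empty_iff_forall_notMem.mpr hxP
    rw [this]
    exact Set.finite_empty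
  have hxQ : {n | Q.I n ⊆ x}.Infinite := by
    apply Set.infinite_of_injective_forall_mem (f := ns) hns_mono.injective
    intro j
    exact fun k hk => Set.mem_iUnion.mpr ⟨j, hk⟩
  exact hxQ (h hxM).2

lemma evmaj_of_mset_le {f : ℕ → ℕ} {Q : IntervalPartition}
    (h : MSet (mkPart f) ⊆ MSet Q) : EvMaj f (FPart Q) := by
  obtain ⟨N, hN⟩ := claimA h
  rw [EvMaj, Filter.eventually_atTop]
  refine ⟨Q.e N, fun k hk => ?_⟩
  have hnN : N ≤ idx Q k := le_idx Q hk
  obtain ⟨m, hm⟩ := hN (idx Q k + 2) (by omega)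
  have h1 : k < (mkPart f).e m := by
    have ha := (hm (I_nonempty (mkPart f) m)).1
    have h2 : k < Q.e (idx Q k + 1) := lt_e_idx Q k
    have h3 : Q.e (idx Q k + 1) ≤ Q.e (idx Q k + 2) := Q.mono.monotone (by omega)
    omega
  have h4 : f k < (mkPart f).e (m + 1) := mkPart_gt f m (by omega)
  have h5 : (mkPart f).e (m + 1) ≤ Q.e (idx Q k + 3) := by
    have hlt := (mkPart f).mono (Nat.lt_succ_self m)
    have hrfl : (mkPart f).e m.succ = (mkPart f).e (m + 1) := rfl
    have hne : (mkPart f).e (m + 1) - 1 ∈ (mkPart f).I m := ⟨by omega, by omega⟩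
    have h9 := (hm hne).2
    have hrfl2 : Q.e (idx Q k + 2 + 1) = Q.e (idx Q k + 3) := rfl
    omega
  have h6 : 1 ≤ Q.e (idx Q k + 3) := by have := le_e Q (idx Q k + 3); omega
  show f k ≤ FPart Q k
  unfold FPart
  omega

lemma evmaj_of_punct {f : ℕ → ℕ} {Q : IntervalPartition}
    (h : {n | Q.I n ⊆ (Set.range (mkPart f).e)ᶜ}.Finite) : EvMaj f (FPart Q) := by
  obtain ⟨u, hu⟩ := h.bddAbove
  rw [EvMaj, Filter.eventually_atTop]
  refine ⟨Q.e (u + 1), fun k hk => ?_⟩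
  have hnu : u + 1 ≤ idx Q k := le_idx Q hk
  have hmeet : ∀ n', u < n' → ∃ a, (mkPart f).e a ∈ Q.I n' := by
    intro n' hn'
    by_contra hc
    push_neg at hc
    have hmem : n' ∈ {n | Q.I n ⊆ (Set.range (mkPart f).e)ᶜ} := by
      intro k' hk'
      rintro ⟨a, ha⟩
      exact hc a (ha ▸ hk')
    have := hu hmem
    omega
  obtain ⟨a, ha⟩ := hmeet (idx Q k + 1) (by omega)
  obtain ⟨b, hb⟩ := hmeet (idx Q k + 2) (by omega)
  have hex : ∃ m, k < (mkPart f).e m :=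
    ⟨k + 1, lt_of_lt_of_le (by omega) (le_e (mkPart f) (k + 1))⟩
  obtain ⟨m, hm1, hmin⟩ : ∃ m, k < (mkPart f).e m ∧ ∀ m', m' < m → ¬ k < (mkPart f).e m' :=
    ⟨Nat.find hex, Nat.find_spec hex, fun m' hm' => Nat.find_min hex hm'⟩
  have hrfl1 : Q.e (idx Q k + 1 + 1) = Q.e (idx Q k + 2) := rfl
  have hrfl2 : Q.e (idx Q k + 2 + 1) = Q.e (idx Q k + 3) := rfl
  have ham : m ≤ a := by
    by_contra hc
    push_neg at hc
    have h1 := hmin a hc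
    have h2 := ha.1
    have h3 : k < Q.e (idx Q k + 1) := lt_e_idx Q k
    omega
  have hPm : (mkPart f).e m < Q.e (idx Q k + 2) := by
    have h1 : (mkPart f).e m ≤ (mkPart f).e a := (mkPart f).mono.monotone ham
    have h2 := ha.2
    omega
  have hbm : m < b := by
    have h1 := hb.1
    by_contra hc
    push_neg at hc
    have h2 := (mkPart f).mono.monotone hc
    omega
  have h5 : (mkPart f).e (m + 1) ≤ (mkPart f).e b := (mkPart f).mono.monotone (by omega)
  have h4 : f k < (mkPart f).e (m + 1) := mkPart_gt f m (by omega)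
  have h6 := hb.2
  have h7 : 1 ≤ Q.e (idx Q k + 3) := by have := le_e Q (idx Q k + 3); omega
  have h8 : Q.e (idx Q k + 2) ≤ Q.e (idx Q k + 3) := Q.mono.monotone (by omega)
  show f k ≤ FPart Q k
  unfold FPart
  omega

lemma escape_lemma (Q : IntervalPartition) (h : ℕ → ℕ) {k : ℕ}
    (hk : upmax (FPart Q) k < h k) :
    ∃ m, idx Q k < m ∧ Q.I m ⊆ (Set.range (mkPart h).e)ᶜ := by
  classical
  have hRj : (mkPart h).e (idx (mkPart h) k) ≤ k := e_idx_le (mkPart h) k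
  have hRj1 : k < (mkPart h).e (idx (mkPart h) k + 1) := lt_e_idx (mkPart h) k
  have hhk : h k < (mkPart h).e (idx (mkPart h) k + 2) :=
    mkPart_gt h (idx (mkPart h) k + 1) (by omega)
  have hFP : FPart Q k ≤ upmax (FPart Q) k := le_upmax _ le_rfl
  have hQ3 : Q.e (idx Q k + 3) ≤ h k := by
    have h1 : FPart Q k = Q.e (idx Q k + 3) - 1 := rfl
    have h2 : 1 ≤ Q.e (idx Q k + 3) := by have := le_e Q (idx Q k + 3); omega
    omega
  have hpunct : ∀ l, k < (mkPart h).e l → (mkPart h).e l < Q.e (idx Q k + 3) →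
      l = idx (mkPart h) k + 1 := by
    intro l h1 h2
    have hjl : idx (mkPart h) k < l := by
      by_contra hc
      push_neg at hc
      have := (mkPart h).mono.monotone hc
      omega
    have hlj2 : l < idx (mkPart h) k + 2 := by
      by_contra hc
      push_neg at hc
      have := (mkPart h).mono.monotone hc
      omega
    omega
  have hwin : ∀ t, idx Q k + 1 ≤ t → t + 1 ≤ idx Q k + 3 → ∀ k', k' ∈ Q.I t →
      k < k' ∧ k' < Q.e (idx Q k + 3) := by
    intro t ht1 ht2 k' hk'
    have ha1 : Q.e (idx Q k + 1) ≤ Q.e t := Q.mono.monotone ht1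
    have ha2 : k < Q.e (idx Q k + 1) := lt_e_idx Q k
    have ha3 : Q.e (t + 1) ≤ Q.e (idx Q k + 3) := Q.mono.monotone ht2
    have ha4 := hk'.1
    have ha5 := hk'.2
    omega
  by_cases hcase : (mkPart h).e (idx (mkPart h) k + 1) ∈ Q.I (idx Q k + 1)
  · refine ⟨idx Q k + 2, by omega, ?_⟩
    intro k' hk'
    simp only [Set.mem_compl_iff, Set.mem_range]
    rintro ⟨l, hl⟩
    have hw := hwin (idx Q k + 2) (by omega) (by omega) k' hk'
    have hl1 : l = idx (mkPart h) k + 1 := hpunct l (by omega) (by omega)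
    rw [hl1] at hl
    have hk'' : (mkPart h).e (idx (mkPart h) k + 1) ∈ Q.I (idx Q k + 2) := by
      rw [hl]
      exact hk'
    have := I_disj Q hcase hk''
    omega
  · refine ⟨idx Q k + 1, by omega, ?_⟩
    intro k' hk'
    simp only [Set.mem_compl_iff, Set.mem_range]
    rintro ⟨l, hl⟩
    have hw := hwin (idx Q k + 1) (by omega) (by omega) k' hk'
    have hl1 : l = idx (mkPart h) k + 1 := hpunct l (by omega) (by omega)
    apply hcase
    rw [hl1] at hl
    rw [hl]
    exact hk'

/-! ### covering helpers -/

noncomputable def nthC (x : Set ℕ) (k : ℕ) : ℕ := Nat.nth (fun m => m ∈ xᶜ) (k + 1)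

lemma nthC_mem {x : Set ℕ} (hx : xᶜ.Infinite) (k : ℕ) : nthC x k ∈ xᶜ :=
  Nat.nth_mem_of_infinite hx _

lemma lt_nthC {x : Set ℕ} (hx : xᶜ.Infinite) (k : ℕ) : k < nthC x k :=
  lt_of_lt_of_le (Nat.lt_succ_self k) ((Nat.nth_strictMono hx).le_apply)

lemma evmaj_refl (f : ℕ → ℕ) : EvMaj f f := Filter.Eventually.of_forall fun _ => le_rfl

lemma mem_mset_of_evmaj {x : Set ℕ} {f : ℕ → ℕ} (hx : x.Infinite) (hxc : xᶜ.Infinite)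
    (h : EvMaj (nthC x) f) : x ∈ MSet (mkPart f) := by
  refine ⟨hx, ?_⟩
  rw [EvMaj, Filter.eventually_atTop] at h
  obtain ⟨K, hK⟩ := h
  apply (Set.finite_Iio K).subset
  intro n hn
  show n < K
  by_contra hc
  push_neg at hc
  have h1 : K ≤ (mkPart f).e n := le_trans hc (le_e (mkPart f) n)
  have h2 : nthC x ((mkPart f).e n) ≤ f ((mkPart f).e n) := hK _ h1
  have h3 : f ((mkPart f).e n) < (mkPart f).e (n + 1) := mkPart_gt f n le_rfl
  have h4 : (mkPart f).e n < nthC x ((mkPart f).e n) := lt_nthC hxc _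
  have h5 : nthC x ((mkPart f).e n) ∈ xᶜ := nthC_mem hxc _
  exact h5 (hn ⟨by omega, by omega⟩)

/-! ### complement of the range of a partition -/

lemma range_compl_infinite (P : IntervalPartition) (h2 : ∀ n, P.e n + 2 ≤ P.e (n + 1)) :
    (Set.range P.e)ᶜ.Infinite := by
  apply Set.infinite_of_injective_forall_mem (f := fun n => P.e n + 1)
  · intro i j hij
    simp only [] at hij
    exact P.mono.injective (by omega)
  · intro n
    simp only [Set.mem_compl_iff, Set.mem_range]
    rintro ⟨l, hl⟩
    rcases Nat.lt_or_ge l (n + 1) with h' | h'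
    · have : P.e l ≤ P.e n := P.mono.monotone (by omega)
      omega
    · have h3 : P.e (n + 1) ≤ P.e l := P.mono.monotone h'
      have := h2 n
      omega

lemma range_infinite (P : IntervalPartition) : (Set.range P.e).Infinite :=
  Set.infinite_range_of_injective P.mono.injective

end Stmt11
namespace Stmt11

open Filter

instance : Inhabited IntervalPartition := ⟨⟨id, rfl, strictMono_id⟩⟩

/-! ### cardinal bookkeeping -/

lemma bNum_le_of {F : Set (ℕ → ℕ)} (h : ∀ g : ℕ → ℕ, ∃ f ∈ F, ¬ EvMaj f g) : bNum ≤ #F :=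
  csInf_le (OrderBot.bddBelow _) ⟨F, rfl, h⟩

lemma dNum_le_of {F : Set (ℕ → ℕ)} (h : ∀ g : ℕ → ℕ, ∃ f ∈ F, EvMaj g f) : dNum ≤ #F :=
  csInf_le (OrderBot.bddBelow _) ⟨F, rfl, h⟩

lemma exists_bound {F : Set (ℕ → ℕ)} (h : #F < bNum) : ∃ g, ∀ f ∈ F, EvMaj f g := by
  by_contra hc
  push_neg at hc
  exact absurd (bNum_le_of hc) (not_le.mpr h)

lemma exists_escape {F : Set (ℕ → ℕ)} (h : #F < dNum) : ∃ g, ∀ f ∈ F, ¬ EvMaj g f := by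
  by_contra hc
  push_neg at hc
  exact absurd (dNum_le_of hc) (not_le.mpr h)

lemma bNum_spec : ∃ F : Set (ℕ → ℕ), #F = bNum ∧ ∀ g : ℕ → ℕ, ∃ f ∈ F, ¬ EvMaj f g := by
  have hne : {c : Cardinal | ∃ F : Set (ℕ → ℕ), #F = c ∧
      ∀ g : ℕ → ℕ, ∃ f ∈ F, ¬ EvMaj f g}.Nonempty := by
    refine ⟨_, Set.univ, rfl, fun g => ⟨fun k => g k + 1, Set.mem_univ _, ?_⟩⟩
    rw [EvMaj, eventually_atTop]
    rintro ⟨K, hK⟩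
    have := hK K le_rfl
    omega
  exact csInf_mem hne

lemma dNum_spec : ∃ F : Set (ℕ → ℕ), #F = dNum ∧ ∀ g : ℕ → ℕ, ∃ f ∈ F, EvMaj g f := by
  have hne : {c : Cardinal | ∃ F : Set (ℕ → ℕ), #F = c ∧
      ∀ g : ℕ → ℕ, ∃ f ∈ F, EvMaj g f}.Nonempty :=
    ⟨_, Set.univ, rfl, fun g => ⟨g, Set.mem_univ _, evmaj_refl g⟩⟩
  exact csInf_mem hne

lemma not_evmaj {f g : ℕ → ℕ} (h : ¬ EvMaj f g) : ∀ N, ∃ k, N ≤ k ∧ g k < f k := by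
  intro N
  by_contra hc
  push_neg at hc
  apply h
  rw [EvMaj, eventually_atTop]
  exact ⟨N, fun k hk => by have := hc k hk; omega⟩

/-! ### the four equalities -/

lemma union_small_bm {S : Set (Set (Set ℕ))} (hS : S ⊆ BM) (hc : #S < bNum) :
    ∃ Q : IntervalPartition, ⋃₀ S ⊆ MSet Q := by
  classical
  have hT : ∀ X ∈ S, ∃ Q : IntervalPartition, X ⊆ MSet Q :=
    fun X hX => talagrand (hS hX).1 (hS hX).2.1 (hS hX).2.2
  choose! QX hQX using hT
  have hcard : #((fun X => fun k => (QX X).e (idx (QX X) k + 3)) '' S) < bNum :=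
    lt_of_le_of_lt Cardinal.mk_image_le hc
  obtain ⟨g, hg⟩ := exists_bound hcard
  refine ⟨mkPart g, ?_⟩
  rintro x ⟨X, hXS, hxX⟩
  have h1 : EvMaj (fun k => (QX X).e (idx (QX X) k + 3)) g := hg _ ⟨X, hXS, rfl⟩
  exact mset_le_mkPart h1 (hQX X hXS hxX)

lemma addBM_eq : addBM = bNum := by
  obtain ⟨F, hFcard, hFunb⟩ := bNum_spec
  set S := (fun f => MSet (mkPart f)) '' F with hSdef
  have hS1 : S ⊆ BM := by rintro _ ⟨f, _, rfl⟩; exact mset_mem_BM _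
  have hS2 : ⋃₀ S ∉ BM := by
    rintro ⟨hi, hd, hm⟩
    obtain ⟨Q, hQ⟩ := talagrand hi hd hm
    obtain ⟨f, hf, hnf⟩ := hFunb (FPart Q)
    apply hnf
    apply evmaj_of_mset_le
    exact (Set.subset_sUnion_of_mem (Set.mem_image_of_mem _ hf)).trans hQ
  have hmemS : #S ∈ {c : Cardinal | ∃ S : Set (Set (Set ℕ)), S ⊆ BM ∧ #S = c ∧ ⋃₀ S ∉ BM} :=
    ⟨S, hS1, rfl, hS2⟩
  have hwit : addBM ≤ #S := csInf_le (OrderBot.bddBelow _) hmemS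
  have hle : addBM ≤ bNum := le_trans hwit (le_trans Cardinal.mk_image_le (le_of_eq hFcard))
  refine le_antisymm hle ?_
  apply le_csInf ⟨#S, hmemS⟩
  rintro c ⟨T, hT1, rfl, hT3⟩
  by_contra hc
  push_neg at hc
  obtain ⟨Q, hQ⟩ := union_small_bm hT1 hc
  apply hT3
  refine ⟨?_, ?_, ?_⟩
  · rintro x ⟨X, hXT, hxX⟩
    exact (hT1 hXT).1 hxX
  · rintro y ⟨X, hXT, hyX⟩ x hxinf hdiff
    exact ⟨X, hXT, (hT1 hXT).2.1 y hyX x hxinf hdiff⟩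
  · exact IsMeagre.mono (Set.image_mono hQ) (mset_meager Q)

lemma unifBM_eq : unifBM = bNum := by
  classical
  obtain ⟨F, hFcard, hFunb⟩ := bNum_spec
  set S := (fun f => (Set.range (mkPart f).e)ᶜ) '' F with hSdef
  have hS1 : ∀ x ∈ S, x.Infinite ∧ xᶜ.Infinite := by
    rintro _ ⟨f, _, rfl⟩
    refine ⟨range_compl_infinite (mkPart f) (mkPart_add_two f), ?_⟩
    rw [compl_compl]
    exact range_infinite (mkPart f)
  have hS2 : ∀ X ∈ BM, ¬ S ⊆ X := by
    rintro X ⟨hi, hd, hm⟩ hSX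
    obtain ⟨Q, hQ⟩ := talagrand hi hd hm
    obtain ⟨f, hf, hnf⟩ := hFunb (FPart Q)
    apply hnf
    apply evmaj_of_punct (Q := Q) (f := f)
    exact (hQ (hSX ⟨f, hf, rfl⟩)).2
  have hmemS : #S ∈ {c : Cardinal | ∃ S : Set (Set ℕ), (∀ x ∈ S, x.Infinite ∧ xᶜ.Infinite) ∧
      #S = c ∧ ∀ X ∈ BM, ¬ S ⊆ X} := ⟨S, hS1, rfl, hS2⟩
  have hwit : unifBM ≤ #S := csInf_le (OrderBot.bddBelow _) hmemS
  have hle : unifBM ≤ bNum := le_trans hwit (le_trans Cardinal.mk_image_le (le_of_eq hFcard))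
  refine le_antisymm hle ?_
  apply le_csInf ⟨#S, hmemS⟩
  rintro c ⟨T, hT1, rfl, hT3⟩
  by_contra hc
  push_neg at hc
  have hcard : #((fun x : Set ℕ =>
      fun k => (mkPart (nthC x)).e (idx (mkPart (nthC x)) k + 3)) '' T) < bNum :=
    lt_of_le_of_lt Cardinal.mk_image_le hc
  obtain ⟨g, hg⟩ := exists_bound hcard
  apply hT3 (MSet (mkPart g)) (mset_mem_BM _)
  intro x hxT
  have hx := hT1 x hxT
  have h1 : x ∈ MSet (mkPart (nthC x)) := mem_mset_of_evmaj hx.1 hx.2 (evmaj_refl _)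
  exact mset_le_mkPart (hg _ ⟨x, hxT, rfl⟩) h1

lemma covBM_eq : covBM = dNum := by
  classical
  obtain ⟨F, hFcard, hFdom⟩ := dNum_spec
  set S := (fun f => MSet (mkPart f)) '' F with hSdef
  have hS1 : S ⊆ BM := by rintro _ ⟨f, _, rfl⟩; exact mset_mem_BM _
  have hS2 : {x : Set ℕ | x.Infinite ∧ xᶜ.Infinite} ⊆ ⋃₀ S := by
    rintro x ⟨hx, hxc⟩
    obtain ⟨f, hf, hEv⟩ := hFdom (nthC x)
    exact ⟨MSet (mkPart f), ⟨f, hf, rfl⟩, mem_mset_of_evmaj hx hxc hEv⟩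
  have hmemS : #S ∈ {c : Cardinal | ∃ S : Set (Set (Set ℕ)), S ⊆ BM ∧ #S = c ∧
      {x : Set ℕ | x.Infinite ∧ xᶜ.Infinite} ⊆ ⋃₀ S} := ⟨S, hS1, rfl, hS2⟩
  have hwit : covBM ≤ #S := csInf_le (OrderBot.bddBelow _) hmemS
  have hle : covBM ≤ dNum := le_trans hwit (le_trans Cardinal.mk_image_le (le_of_eq hFcard))
  refine le_antisymm hle ?_
  apply le_csInf ⟨#S, hmemS⟩
  rintro c ⟨T, hT1, rfl, hT3⟩
  by_contra hcon
  push_neg at hcon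
  have hT' : ∀ X ∈ T, ∃ Q : IntervalPartition, X ⊆ MSet Q :=
    fun X hX => talagrand (hT1 hX).1 (hT1 hX).2.1 (hT1 hX).2.2
  choose! QX hQX using hT'
  have hcard : #((fun X => upmax (FPart (QX X))) '' T) < dNum :=
    lt_of_le_of_lt Cardinal.mk_image_le hcon
  obtain ⟨h, hh⟩ := exists_escape hcard
  have hxinf : ((Set.range (mkPart h).e)ᶜ : Set ℕ).Infinite :=
    range_compl_infinite _ (mkPart_add_two h)
  have hxcinf : (((Set.range (mkPart h).e)ᶜ)ᶜ : Set ℕ).Infinite := by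
    rw [compl_compl]
    exact range_infinite _
  obtain ⟨X, hXT, hxX⟩ := hT3 ⟨hxinf, hxcinf⟩
  have hxM := hQX X hXT hxX
  have hfreq := not_evmaj (hh _ ⟨X, hXT, rfl⟩)
  have hinf : {n | (QX X).I n ⊆ (Set.range (mkPart h).e)ᶜ}.Infinite := by
    apply infinite_of_unbounded
    intro B
    obtain ⟨k, hkB, hk⟩ := hfreq ((QX X).e B)
    obtain ⟨m, hm1, hm2⟩ := escape_lemma (QX X) h hk
    have hBk : B ≤ idx (QX X) k := le_idx _ hkB
    exact ⟨m, by omega, hm2⟩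
  exact hinf hxM.2

lemma cofBM_eq : cofBM = dNum := by
  classical
  obtain ⟨F, hFcard, hFdom⟩ := dNum_spec
  set C := (fun f => MSet (mkPart f)) '' F with hCdef
  have hC1 : C ⊆ BM := by rintro _ ⟨f, _, rfl⟩; exact mset_mem_BM _
  have hC2 : ∀ X ∈ BM, ∃ Y ∈ C, X ⊆ Y := by
    rintro X ⟨hi, hd, hm⟩
    obtain ⟨Q, hQ⟩ := talagrand hi hd hm
    obtain ⟨f, hf, hEv⟩ := hFdom (fun k => Q.e (idx Q k + 3))
    exact ⟨MSet (mkPart f), ⟨f, hf, rfl⟩, hQ.trans (mset_le_mkPart hEv)⟩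
  have hmemC : #C ∈ {c : Cardinal | ∃ C : Set (Set (Set ℕ)), C ⊆ BM ∧ #C = c ∧
      ∀ X ∈ BM, ∃ Y ∈ C, X ⊆ Y} := ⟨C, hC1, rfl, hC2⟩
  have hwit : cofBM ≤ #C := csInf_le (OrderBot.bddBelow _) hmemC
  have hle : cofBM ≤ dNum := le_trans hwit (le_trans Cardinal.mk_image_le (le_of_eq hFcard))
  refine le_antisymm hle ?_
  apply le_csInf ⟨#C, hmemC⟩
  rintro c ⟨T, hT1, rfl, hT3⟩
  have hT' : ∀ Y ∈ T, ∃ Q : IntervalPartition, Y ⊆ MSet Q :=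
    fun Y hY => talagrand (hT1 hY).1 (hT1 hY).2.1 (hT1 hY).2.2
  choose! QY hQY using hT'
  refine le_trans (dNum_le_of (F := (fun Y => FPart (QY Y)) '' T) ?_) Cardinal.mk_image_le
  intro g
  obtain ⟨Y, hYT, hsub⟩ := hT3 (MSet (mkPart g)) (mset_mem_BM _)
  exact ⟨FPart (QY Y), ⟨Y, hYT, rfl⟩, evmaj_of_mset_le (hsub.trans (hQY Y hYT))⟩

end Stmt11

/-- Theorem 3: add(B_M) = unif(B_M) = 𝔟 and cov(B_M) = cof(B_M) = 𝔡. -/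
theorem stmt11 : addBM = bNum ∧ unifBM = bNum ∧ covBM = dNum ∧ cofBM = dNum :=
  ⟨Stmt11.addBM_eq, Stmt11.unifBM_eq, Stmt11.covBM_eq, Stmt11.cofBM_eq⟩
end

section
/- The least cardinality of a set S ⊆ [ω]^ω that meets every groupwise dense subset of [ω]^ω equals 2^{ℵ_0}. In particular, for every family (a_i)_{i∈I} of infinite subsets of ω with |I| < 2^{ℵ_0}, the set X = {x ∈ [ω]^ω : for all i, not a_i ≤ x} is groupwise dense and contains no a_i. -/
open Set Cardinal MeasureTheory

lemma exists_mem_I (P : IntervalPartition) (k : ℕ) : ∃ n, k ∈ P.I n := by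
  classical
  set n := Nat.findGreatest (fun n => P.e n ≤ k) k with hn
  have h1 : P.e n ≤ k :=
    Nat.findGreatest_spec (P := fun n => P.e n ≤ k) (Nat.zero_le k)
      (show (fun n => P.e n ≤ k) 0 by simp [P.zero])
  refine ⟨n, h1, ?_⟩
  by_contra h
  push_neg at h
  have hle : n + 1 ≤ k := le_trans P.mono.le_apply h
  have := Nat.le_findGreatest (P := fun n => P.e n ≤ k) hle h
  omega

lemma I_eq_of_mem (P : IntervalPartition) {m n k : ℕ} (hm : k ∈ P.I m) (hn : k ∈ P.I n) :
    m = n := by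
  have h1 := hm.1; have h2 := hm.2; have h3 := hn.1; have h4 := hn.2
  by_contra hne
  rcases Nat.lt_or_ge m n with h | h
  · have hmn : m + 1 ≤ n := h
    have := P.mono.monotone hmn
    omega
  · have h' : n + 1 ≤ m := lt_of_le_of_ne h (Ne.symm hne)
    have := P.mono.monotone h'
    omega

lemma B_infinite (P : IntervalPartition) {a : Set ℕ} (ha : a.Infinite) :
    {n | (a ∩ P.I n).Nonempty}.Infinite := by
  by_contra hfin
  rw [Set.not_infinite] at hfin
  obtain ⟨N, hN⟩ := hfin.bddAbove
  apply ha
  apply Set.Finite.subset (Set.finite_Ico 0 (P.e (N + 1)))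
  intro k hk
  obtain ⟨n, hn⟩ := exists_mem_I P k
  have hnS : n ∈ {n | (a ∩ P.I n).Nonempty} := ⟨k, hk, hn⟩
  have hn2 := hN hnS
  have := P.mono.monotone (show n + 1 ≤ N + 1 by omega)
  exact ⟨Nat.zero_le k, lt_of_lt_of_le hn.2 this⟩

noncomputable def ADf (f : ℕ → Bool) : Set ℕ :=
  Set.range fun n => Encodable.encode (List.ofFn fun i : Fin n => f i)

lemma ADf_infinite (f : ℕ → Bool) : (ADf f).Infinite := by
  apply Set.infinite_range_of_injective
  intro m n h
  have := congrArg (fun l => l.length) (Encodable.encode_injective h)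
  simpa using this

lemma ADf_ad {f g : ℕ → Bool} (hfg : f ≠ g) : (ADf f ∩ ADf g).Finite := by
  have hex : ∃ m, f m ≠ g m := by
    by_contra h; push_neg at h; exact hfg (funext h)
  classical
  obtain ⟨m, hm⟩ := hex
  apply Set.Finite.subset
    (Set.Finite.image (fun n => Encodable.encode (List.ofFn fun i : Fin n => f i))
      (Set.finite_Iic m))
  rintro k ⟨⟨n, rfl⟩, ⟨n', hn'⟩⟩
  have hl : List.ofFn (fun i : Fin n' => g i) = List.ofFn (fun i : Fin n => f i) :=
    Encodable.encode_injective hn'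
  have hlen : n' = n := by
    have := congrArg List.length hl; simpa using this
  subst hlen
  have hfun : (fun i : Fin n' => g i) = fun i : Fin n' => f i := by
    rwa [List.ofFn_inj] at hl
  refine ⟨n', ?_, rfl⟩
  simp only [Set.mem_Iic]
  by_contra hlt
  push_neg at hlt
  exact hm (congrFun hfun ⟨m, hlt⟩).symm

lemma exists_good {ι : Type} (B : ι → Set ℕ) (hB : ∀ i, (B i).Infinite)
    (hι : #ι < Cardinal.continuum) :
    ∃ A : Set ℕ, A.Infinite ∧ ∀ i, (B i \ A).Infinite := by
  by_contra h
  push_neg at h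
  have h' : ∀ f : ℕ → Bool, ∃ i, (B i \ ADf f).Finite := by
    intro f
    obtain ⟨i, hi⟩ := h (ADf f) (ADf_infinite f)
    exact ⟨i, hi⟩
  classical
  choose φ hφ using h'
  have hinj : Function.Injective φ := by
    intro f g hfg
    by_contra hne
    have h1 := hφ f
    have h2 := hφ g
    rw [hfg] at h1
    have : (B (φ g)).Finite := by
      apply Set.Finite.subset ((h1.union h2).union (ADf_ad hne))
      intro n hn
      by_cases hf : n ∈ ADf f
      · by_cases hg : n ∈ ADf g
        · exact Or.inr ⟨hf, hg⟩
        · exact Or.inl (Or.inr ⟨hn, hg⟩)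
      · exact Or.inl (Or.inl ⟨hn, hf⟩)
    exact hB (φ g) this
  have : Cardinal.continuum ≤ #ι := by
    have := Cardinal.mk_le_of_injective hinj
    rwa [show #(ℕ → Bool) = Cardinal.continuum by
      rw [Cardinal.mk_arrow]; simp [Cardinal.two_power_aleph0]] at this
  exact absurd hι (not_lt.2 this)

lemma key (ι : Type) (a : ι → Set ℕ) (hι : #ι < Cardinal.continuum)
    (ha : ∀ i, (a i).Infinite) :
    GroupwiseDense {x : Set ℕ | x.Infinite ∧ ∀ i, ¬ (a i \ x).Finite} := by
  classical
  refine ⟨fun x hx => hx.1, ?_, ?_⟩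
  · intro y hy x hxinf hxy
    refine ⟨hxinf, fun i hfin => hy.2 i ?_⟩
    apply Set.Finite.subset (hfin.union hxy)
    rintro k ⟨hka, hky⟩
    by_cases hx : k ∈ x
    · exact Or.inr ⟨hx, hky⟩
    · exact Or.inl ⟨hka, hx⟩
  · intro P
    obtain ⟨A, hAinf, hA⟩ := exists_good (fun i => {n | (a i ∩ P.I n).Nonempty})
      (fun i => B_infinite P (ha i)) hι
    refine ⟨A, hAinf, ?_, ?_⟩
    · -- the union is infinite
      have h1 : (P.e '' A).Infinite := hAinf.image (P.mono.injective.injOn)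
      apply h1.mono
      rintro k ⟨n, hn, rfl⟩
      exact Set.mem_biUnion hn ⟨le_refl _, P.mono (Nat.lt_succ_self n)⟩
    · intro i hfin
      set c : ℕ → ℕ := fun n => if h : (a i ∩ P.I n).Nonempty then h.choose else 0 with hc
      have hcmem : ∀ n ∈ {n | (a i ∩ P.I n).Nonempty} \ A, c n ∈ a i ∩ P.I n := by
        rintro n ⟨hn, -⟩
        have hn' : (a i ∩ P.I n).Nonempty := hn
        simp only [hc]
        rw [dif_pos hn']
        exact hn'.choose_spec
      have hinj : Set.InjOn c ({n | (a i ∩ P.I n).Nonempty} \ A) := by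
        intro m hm n hn hmn
        have h1 := (hcmem m hm).2
        have h2 := (hcmem n hn).2
        rw [hmn] at h1
        exact I_eq_of_mem P h1 h2
      have himg : (c '' ({n | (a i ∩ P.I n).Nonempty} \ A)).Infinite :=
        (hA i).image hinj
      apply himg
      apply Set.Finite.subset hfin
      rintro k ⟨n, hn, rfl⟩
      refine ⟨(hcmem n hn).1, ?_⟩
      intro hk
      rw [Set.mem_iUnion₂] at hk
      obtain ⟨n', hn', hk⟩ := hk
      have := I_eq_of_mem P hk (hcmem n hn).2
      exact hn.2 (this ▸ hn')

lemma mk_infSets : #InfSets = Cardinal.continuum := by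
  apply le_antisymm
  · calc #InfSets ≤ #(Set ℕ) := Cardinal.mk_set_le _
      _ = Cardinal.continuum := by rw [Cardinal.mk_set, Cardinal.mk_nat, Cardinal.two_power_aleph0]
  · have hinj : Function.Injective (fun x : Set ℕ =>
        (⟨{m | m % 2 = 1 ∨ (m % 2 = 0 ∧ m / 2 ∈ x)}, by
          apply Set.infinite_of_injective_forall_mem (f := fun k : ℕ => 2 * k + 1)
          · intro a b h
            have h' : 2 * a + 1 = 2 * b + 1 := h
            omega
          · intro a; left; omega⟩ : InfSets)) := by
      intro x y h
      have h' := congrArg Subtype.val h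
      ext n
      have h2 := Set.ext_iff.mp h' (2 * n)
      simp only [Set.mem_setOf_eq] at h2
      constructor
      · intro hn
        rcases h2.mp (Or.inr ⟨by omega, by rwa [show 2 * n / 2 = n by omega]⟩) with h3 | h3
        · omega
        · rw [show 2 * n / 2 = n by omega] at h3; exact h3.2
      · intro hn
        rcases h2.mpr (Or.inr ⟨by omega, by rwa [show 2 * n / 2 = n by omega]⟩) with h3 | h3
        · omega
        · rw [show 2 * n / 2 = n by omega] at h3; exact h3.2
    have := Cardinal.mk_le_of_injective hinj
    rwa [Cardinal.mk_set, Cardinal.mk_nat, Cardinal.two_power_aleph0] at this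

/-- unif(B_M⁺) = 2^{ℵ₀}; moreover, given fewer than continuum many infinite `a i`,
the set `{x ∈ [ω]^ω : ∀ i, ¬ a i ≤ x}` is groupwise dense and contains no `a i`. -/
theorem stmt12 :
    sInf {c : Cardinal | ∃ S : Set (Set ℕ), S ⊆ InfSets ∧ #S = c ∧
        ∀ G : Set (Set ℕ), GroupwiseDense G → (S ∩ G).Nonempty} = Cardinal.continuum ∧
    ∀ (ι : Type) (a : ι → Set ℕ), #ι < Cardinal.continuum → (∀ i, (a i).Infinite) →
      GroupwiseDense {x : Set ℕ | x.Infinite ∧ ∀ i, ¬ (a i \ x).Finite} ∧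
      ∀ i, a i ∉ {x : Set ℕ | x.Infinite ∧ ∀ i, ¬ (a i \ x).Finite} := by
  constructor
  · have hmem : Cardinal.continuum ∈ {c : Cardinal | ∃ S : Set (Set ℕ), S ⊆ InfSets ∧ #S = c ∧
        ∀ G : Set (Set ℕ), GroupwiseDense G → (S ∩ G).Nonempty} := by
      refine ⟨InfSets, le_refl _, mk_infSets, ?_⟩
      intro G hG
      obtain ⟨A, hAinf, hA⟩ := hG.2.2 ⟨id, rfl, strictMono_id⟩
      exact ⟨_, hG.1 hA, hA⟩
    apply le_antisymm
    · exact csInf_le' hmem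
    · apply le_csInf ⟨_, hmem⟩
      rintro c ⟨S, hSsub, rfl, hSmeet⟩
      by_contra hlt
      push_neg at hlt
      have hgw := key S (fun s => (s : Set ℕ)) hlt (fun s => hSsub s.2)
      obtain ⟨x, hxS, hxG⟩ := hSmeet _ hgw
      exact hxG.2 ⟨x, hxS⟩ (by simp)
  · intro ι a hι ha
    refine ⟨key ι a hι ha, ?_⟩
    intro i hi
    exact hi.2 i (by simp)
end

section
/- The least cardinality of a collection of groupwise dense subsets of [ω]^ω whose intersection is not groupwise dense equals 𝔤, the least cardinality of a collection of groupwise dense subsets of [ω]^ω whose intersection is empty. -/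
open Set Cardinal MeasureTheory

lemma IP.le_e (P : IntervalPartition) (n : ℕ) : n ≤ P.e n := P.mono.le_apply

lemma IP.mem_I_idx (P : IntervalPartition) (k : ℕ) : k ∈ P.I (idx P k) := by
  constructor
  · exact Nat.findGreatest_spec (P := fun n => P.e n ≤ k) (m := 0) (n := k)
      (Nat.zero_le k) (by show P.e 0 ≤ k; rw [P.zero]; exact Nat.zero_le k)
  · by_contra h
    push_neg at h
    exact Nat.findGreatest_is_greatest (lt_add_one (idx P k))
      (le_trans (IP.le_e P _) h) h

lemma IP.idx_ge (P : IntervalPartition) {a k : ℕ} (h : P.e a ≤ k) : a ≤ idx P k :=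
  Nat.le_findGreatest (le_trans (IP.le_e P a) h) h

/-- Composition of interval partitions: blocks of the composition are unions of
consecutive blocks of `P` grouped according to `Q`. -/
def IP.comp (P Q : IntervalPartition) : IntervalPartition :=
  ⟨P.e ∘ Q.e, by simp [Q.zero, P.zero], P.mono.comp Q.mono⟩

lemma IP.comp_I (P Q : IntervalPartition) (m : ℕ) :
    (IP.comp P Q).I m = ⋃ n ∈ Q.I m, P.I n := by
  ext k
  simp only [IntervalPartition.I, IP.comp, Set.mem_Ico, Set.mem_iUnion, Function.comp,
    exists_prop]
  constructor
  · rintro ⟨h1, h2⟩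
    refine ⟨idx P k, ⟨IP.idx_ge P h1, ?_⟩, (IP.mem_I_idx P k).1, (IP.mem_I_idx P k).2⟩
    by_contra h
    push_neg at h
    exact absurd ((IP.mem_I_idx P k).1) (not_le.mpr (lt_of_lt_of_le h2 (P.mono.monotone h)))
  · rintro ⟨n, ⟨hn1, hn2⟩, hk1, hk2⟩
    exact ⟨le_trans (P.mono.monotone hn1) hk1, lt_of_lt_of_le hk2 (P.mono.monotone hn2)⟩

lemma IP.U_infinite (P : IntervalPartition) {A : Set ℕ} (hA : A.Infinite) :
    (⋃ n ∈ A, P.I n).Infinite := by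
  refine (hA.image P.mono.injective.injOn).mono ?_
  rintro k ⟨n, hn, rfl⟩
  exact Set.mem_biUnion hn ⟨le_rfl, P.mono (lt_add_one n)⟩

lemma IP.U_diff (P : IntervalPartition) {A B : Set ℕ} (h : (A \ B).Finite) :
    ((⋃ n ∈ A, P.I n) \ (⋃ n ∈ B, P.I n)).Finite := by
  refine Set.Finite.subset (h.biUnion (t := fun n => P.I n)
    (fun n _ => Set.finite_Ico (P.e n) (P.e (n+1)))) ?_
  rintro k ⟨hk1, hk2⟩
  simp only [Set.mem_iUnion, exists_prop] at hk1 hk2 ⊢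
  obtain ⟨n, hn, hkn⟩ := hk1
  exact ⟨n, ⟨hn, fun hB => hk2 ⟨n, hB, hkn⟩⟩, hkn⟩

lemma IP.GP_gwd (P : IntervalPartition) {G : Set (Set ℕ)} (hG : GroupwiseDense G) :
    GroupwiseDense {A : Set ℕ | A.Infinite ∧ (⋃ n ∈ A, P.I n) ∈ G} := by
  obtain ⟨hG1, hG2, hG3⟩ := hG
  refine ⟨fun A hA => hA.1, ?_, ?_⟩
  · rintro y ⟨hy1, hy2⟩ x hx hxy
    exact ⟨hx, hG2 _ hy2 _ (IP.U_infinite P hx) (IP.U_diff P hxy)⟩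
  · intro Q
    obtain ⟨B, hB, hBU⟩ := hG3 (IP.comp P Q)
    refine ⟨B, hB, IP.U_infinite Q hB, ?_⟩
    have heq : (⋃ n ∈ ⋃ m ∈ B, Q.I m, P.I n) = ⋃ m ∈ B, (IP.comp P Q).I m := by
      simp only [IP.comp_I]
      ext k
      simp only [Set.mem_iUnion, exists_prop]
      tauto
    rw [heq]
    exact hBU

/-- InfSets itself is groupwise dense. -/
lemma infSets_gwd : GroupwiseDense InfSets := by
  refine ⟨le_refl _, fun y _ x hx _ => hx, fun P => ⟨Set.univ, Set.infinite_univ, ?_⟩⟩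
  exact IP.U_infinite P Set.infinite_univ

lemma key_construction {S : Set (Set (Set ℕ))} (hS : ∀ G ∈ S, GroupwiseDense G)
    (hnot : ¬ GroupwiseDense (InfSets ∩ ⋂₀ S)) :
    ∃ S' : Set (Set (Set ℕ)), (∀ G ∈ S', GroupwiseDense G) ∧ #S' ≤ #S ∧
      InfSets ∩ ⋂₀ S' = ∅ := by
  -- The intersection is downward closed and contained in InfSets automatically,
  -- so `hnot` provides a bad interval partition `P`.
  have hsub : InfSets ∩ ⋂₀ S ⊆ InfSets := Set.inter_subset_left
  have hdc : DownClosed (InfSets ∩ ⋂₀ S) := by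
    rintro y ⟨hy1, hy2⟩ x hx hxy
    refine ⟨hx, fun G hG => (hS G hG).2.1 y (hy2 G hG) x hx hxy⟩
  have hP : ∃ P : IntervalPartition, ∀ A : Set ℕ, A.Infinite →
      (⋃ n ∈ A, P.I n) ∉ InfSets ∩ ⋂₀ S := by
    by_contra h
    push_neg at h
    exact hnot ⟨hsub, hdc, fun P => by
      obtain ⟨A, hA, hA2⟩ := h P; exact ⟨A, hA, hA2⟩⟩
  obtain ⟨P, hP⟩ := hP
  refine ⟨(fun G => {A : Set ℕ | A.Infinite ∧ (⋃ n ∈ A, P.I n) ∈ G}) '' S, ?_, ?_, ?_⟩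
  · rintro G' ⟨G, hG, rfl⟩
    exact IP.GP_gwd P (hS G hG)
  · exact Cardinal.mk_image_le
  · ext x
    simp only [Set.mem_empty_iff_false, iff_false, Set.mem_inter_iff, not_and]
    intro hx hx2
    refine hP x hx ⟨IP.U_infinite P hx, fun G hG => ?_⟩
    exact (hx2 _ ⟨G, hG, rfl⟩).2

/-- add(B_M⁺) = cov(B_M⁺): the least number of groupwise dense sets with non-groupwise-dense
intersection equals 𝔤, the least number of groupwise dense sets with empty intersection. -/
theorem stmt13 :
    sInf {c : Cardinal | ∃ S : Set (Set (Set ℕ)), (∀ G ∈ S, GroupwiseDense G) ∧ #S = c ∧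
      ¬ GroupwiseDense (InfSets ∩ ⋂₀ S)} = gNum := by
  set L := {c : Cardinal | ∃ S : Set (Set (Set ℕ)), (∀ G ∈ S, GroupwiseDense G) ∧ #S = c ∧
      ¬ GroupwiseDense (InfSets ∩ ⋂₀ S)} with hL
  set gS := {c : Cardinal | ∃ S : Set (Set (Set ℕ)), (∀ G ∈ S, GroupwiseDense G) ∧
      #S = c ∧ InfSets ∩ ⋂₀ S = ∅} with hgS
  have hsub : gS ⊆ L := by
    rintro c ⟨S, h1, h2, h3⟩
    refine ⟨S, h1, h2, ?_⟩
    rw [h3]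
    rintro ⟨-, -, h⟩
    obtain ⟨A, -, hA⟩ := h ⟨id, rfl, strictMono_id⟩
    exact hA
  have hkey : ∀ c ∈ L, ∃ c' ∈ gS, c' ≤ c := by
    rintro c ⟨S, h1, h2, h3⟩
    obtain ⟨S', hS'1, hS'2, hS'3⟩ := key_construction h1 h3
    exact ⟨#S', ⟨S', hS'1, rfl, hS'3⟩, h2 ▸ hS'2⟩
  rcases Set.eq_empty_or_nonempty L with hLe | hLne
  · have : gS = ∅ := Set.eq_empty_of_subset_empty (hLe ▸ hsub)
    rw [gNum, ← hgS, this, hLe]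
  · have hgSne : gS.Nonempty := by
      obtain ⟨c, hc⟩ := hLne
      obtain ⟨c', hc', -⟩ := hkey c hc
      exact ⟨c', hc'⟩
    refine le_antisymm ?_ ?_
    · exact le_csInf hgSne (fun c hc => csInf_le' (hsub hc))
    · refine le_csInf hLne (fun c hc => ?_)
      obtain ⟨c', hc', hle⟩ := hkey c hc
      exact le_trans (csInf_le' hc') hle
end

section
/- Let cof(B_M^+) denote the least cardinality of a family C of groupwise dense subsets of [ω]^ω such that every groupwise dense subset of [ω]^ω includes some member of C. Then cof(B_M^+) ≥ 2^{ℵ_0} and cof(B_M^+) > 𝔟. -/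
open Set Cardinal MeasureTheory

/-- The cofinality of the family of groupwise dense sets. -/
noncomputable def cofBMplus : Cardinal :=
  sInf {c : Cardinal | ∃ C : Set (Set (Set ℕ)), (∀ G ∈ C, GroupwiseDense G) ∧ #C = c ∧
    ∀ X : Set (Set ℕ), GroupwiseDense X → ∃ G ∈ C, G ⊆ X}

section AuxStmt14

open Filter

/-! ### Small generalities -/

private lemma evMaj_trans {f g h : ℕ → ℕ} (h1 : EvMaj f g) (h2 : EvMaj g h) : EvMaj f h :=
  (h1.and h2).mono fun _ hk => le_trans hk.1 hk.2

private lemma evMaj_of_le {f g : ℕ → ℕ} (h : ∀ k, f k ≤ g k) : EvMaj f g :=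
  Filter.Eventually.of_forall h

private lemma not_evMaj_succ_self (g : ℕ → ℕ) : ¬ EvMaj (g + 1) g := by
  intro h
  obtain ⟨k, hk⟩ := h.exists
  simp only [Pi.add_apply, Pi.one_apply] at hk
  omega

private lemma infinite_of_unbounded {S : Set ℕ} (h : ∀ N, ∃ m ∈ S, N ≤ m) : S.Infinite := by
  intro hfin
  obtain ⟨BB, hB⟩ := hfin.bddAbove
  obtain ⟨m, hm, hNm⟩ := h (BB + 1)
  have := hB hm
  omega

/-! ### Interval partition basics -/

namespace IntervalPartition

variable (P : IntervalPartition)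

private lemma le_e : ∀ n, n ≤ P.e n := by
  intro n
  induction n with
  | zero => exact Nat.zero_le _
  | succ n ih => exact Nat.succ_le_of_lt (lt_of_le_of_lt ih (P.mono (Nat.lt_succ_self n)))

private lemma e_idx_le (k : ℕ) : P.e (idx P k) ≤ k :=
  Nat.findGreatest_spec (P := fun n => P.e n ≤ k) (Nat.zero_le k)
    (by show P.e 0 ≤ k; simp [P.zero])

private lemma lt_e_idx_succ (k : ℕ) : k < P.e (idx P k + 1) := by
  by_contra h
  push_neg at h
  exact Nat.findGreatest_is_greatest (Nat.lt_succ_self _) (le_trans (P.le_e _) h) h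

private lemma mem_I_idx (k : ℕ) : k ∈ P.I (idx P k) :=
  Set.mem_Ico.mpr ⟨P.e_idx_le k, P.lt_e_idx_succ k⟩

private lemma eq_idx_of_mem {k n : ℕ} (h : k ∈ P.I n) : n = idx P k := by
  rw [IntervalPartition.I, Set.mem_Ico] at h
  rcases lt_trichotomy n (idx P k) with hlt | heq | hgt
  · have h1 : P.e (n + 1) ≤ P.e (idx P k) := P.mono.monotone (Nat.succ_le_of_lt hlt)
    have h2 := P.e_idx_le k
    omega
  · exact heq
  · have h1 : P.e (idx P k + 1) ≤ P.e n := P.mono.monotone (Nat.succ_le_of_lt hgt)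
    have h2 := P.lt_e_idx_succ k
    omega

private lemma idx_disjoint {k m n : ℕ} (hm : k ∈ P.I m) (hn : k ∈ P.I n) : m = n := by
  rw [P.eq_idx_of_mem hm, P.eq_idx_of_mem hn]

private lemma le_idx {N k : ℕ} (h : P.e N ≤ k) : N ≤ idx P k :=
  Nat.le_findGreatest (le_trans (P.le_e N) h) h

private lemma e_mem_I (n : ℕ) : P.e n ∈ P.I n :=
  Set.mem_Ico.mpr ⟨le_rfl, P.mono (Nat.lt_succ_self n)⟩

private lemma biUnion_infinite {A : Set ℕ} (hA : A.Infinite) : (⋃ n ∈ A, P.I n).Infinite := by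
  have h1 : (P.e '' A).Infinite := hA.image (P.mono.injective.injOn)
  refine h1.mono ?_
  rintro _ ⟨n, hn, rfl⟩
  exact Set.mem_biUnion hn (P.e_mem_I n)

private lemma meets_infinite {x : Set ℕ} (hx : x.Infinite) :
    {n : ℕ | (x ∩ P.I n).Nonempty}.Infinite := by
  by_contra hfin
  rw [Set.not_infinite] at hfin
  have hsub : x ⊆ ⋃ n ∈ {n : ℕ | (x ∩ P.I n).Nonempty}, P.I n := by
    intro k hk
    exact Set.mem_biUnion (⟨k, hk, P.mem_I_idx k⟩ : (x ∩ P.I (idx P k)).Nonempty) (P.mem_I_idx k)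
  exact hx (Set.Finite.subset (hfin.biUnion fun n _ => Set.finite_Ico _ _) hsub)

private lemma diff_biUnion_infinite {x A : Set ℕ}
    (h : ({n : ℕ | (x ∩ P.I n).Nonempty} \ A).Infinite) :
    (x \ ⋃ n ∈ A, P.I n).Infinite := by
  classical
  set c : ℕ → ℕ := fun n => if hn : (x ∩ P.I n).Nonempty then hn.choose else 0 with hc
  have hcmem : ∀ n ∈ {n : ℕ | (x ∩ P.I n).Nonempty} \ A, c n ∈ x ∩ P.I n := by
    intro n hn
    have hne : (x ∩ P.I n).Nonempty := hn.1
    have hceq : c n = hne.choose := by simp only [hc]; rw [dif_pos hne]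
    rw [hceq]
    exact hne.choose_spec
  have hinj : Set.InjOn c ({n : ℕ | (x ∩ P.I n).Nonempty} \ A) := by
    intro m hm n hn hmn
    have h1 : c n ∈ P.I m := hmn ▸ (hcmem m hm).2
    exact P.idx_disjoint h1 (hcmem n hn).2
  refine (h.image hinj).mono ?_
  rintro _ ⟨n, hn, rfl⟩
  refine ⟨(hcmem n hn).1, ?_⟩
  intro hmem
  obtain ⟨m, hmA, hmI⟩ := Set.mem_iUnion₂.mp hmem
  have : n = m := P.idx_disjoint (hcmem n hn).2 hmI
  exact hn.2 (this ▸ hmA)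

private lemma pair_subset {a b : ℕ} (h3 : P.e (idx P a + 3) ≤ b) :
    P.I (idx P a + 1) ⊆ Set.Ico a b ∧ P.I (idx P a + 2) ⊆ Set.Ico a b := by
  constructor
  · intro k hk
    rw [IntervalPartition.I, Set.mem_Ico] at hk
    refine Set.mem_Ico.mpr ⟨le_trans (le_of_lt (P.lt_e_idx_succ a)) hk.1, ?_⟩
    exact lt_of_lt_of_le hk.2 (le_trans (P.mono.monotone (by omega)) h3)
  · intro k hk
    rw [IntervalPartition.I, Set.mem_Ico] at hk
    refine Set.mem_Ico.mpr ⟨?_, lt_of_lt_of_le hk.2 h3⟩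
    exact le_trans (le_of_lt (lt_of_lt_of_le (P.lt_e_idx_succ a) (P.mono.monotone (by omega)))) hk.1

private lemma pairs_escape {x A : Set ℕ}
    (hA : ∀ m ∈ A, m + 1 ∉ A)
    (hM : ∀ N, ∃ m, N ≤ m ∧ P.I m ⊆ x ∧ P.I (m + 1) ⊆ x) :
    ({m : ℕ | (x ∩ P.I m).Nonempty} \ A).Infinite := by
  apply infinite_of_unbounded
  intro N
  obtain ⟨m, hNm, h1, h2⟩ := hM N
  have ht1 : m ∈ {m : ℕ | (x ∩ P.I m).Nonempty} := ⟨P.e m, h1 (P.e_mem_I m), P.e_mem_I m⟩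
  have ht2 : m + 1 ∈ {m : ℕ | (x ∩ P.I m).Nonempty} :=
    ⟨P.e (m + 1), h2 (P.e_mem_I (m + 1)), P.e_mem_I (m + 1)⟩
  by_cases hmA : m ∈ A
  · exact ⟨m + 1, ⟨ht2, hA m hmA⟩, by omega⟩
  · exact ⟨m, ⟨ht1, hmA⟩, hNm⟩

end IntervalPartition

/-! ### Cardinality of function spaces -/

private lemma mk_funBool : #(ℕ → Bool) = Cardinal.continuum := by
  rw [← Cardinal.power_def, Cardinal.mk_bool, Cardinal.mk_nat, Cardinal.two_power_aleph0]

private lemma mk_funNat : #(ℕ → ℕ) = Cardinal.continuum := by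
  rw [← Cardinal.power_def, Cardinal.mk_nat, Cardinal.power_self_eq le_rfl,
    Cardinal.two_power_aleph0]

/-! ### The almost-disjoint-family counting argument -/

private noncomputable def zset (r : ℕ → Bool) : Set ℕ :=
  Set.range fun n => Encodable.encode (List.ofFn fun q : Fin n => r q)

private lemma zset_infinite (r : ℕ → Bool) : (zset r).Infinite := by
  apply Set.infinite_range_of_injective
  intro n m hnm
  have := Encodable.encode_injective hnm
  simpa using congrArg List.length this

private lemma zset_inter_finite {r r' : ℕ → Bool} (hne : r ≠ r') :
    (zset r ∩ zset r').Finite := by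
  obtain ⟨k, hk⟩ := Function.ne_iff.mp hne
  apply Set.Finite.subset
    ((Set.finite_Iic k).image fun n => Encodable.encode (List.ofFn fun q : Fin n => r q))
  rintro c ⟨⟨n, rfl⟩, ⟨m, hm⟩⟩
  have hpe := Encodable.encode_injective hm
  have hnm : m = n := by simpa using congrArg List.length hpe
  subst hnm
  have hfe := List.ofFn_inj.mp hpe
  have hle : m ≤ k := by
    by_contra hgt
    push_neg at hgt
    have := congrFun hfe (⟨k, hgt⟩ : Fin m)
    exact hk (this.symm)
  exact ⟨m, hle, rfl⟩

private lemma exists_avoid {ι : Type} (T : ι → Set ℕ) (hc : #ι < Cardinal.continuum)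
    (hT : ∀ i, (T i).Infinite) :
    ∃ A : Set ℕ, A.Infinite ∧ ∀ i, (T i \ A).Infinite := by
  classical
  by_contra hcon
  push_neg at hcon
  have key : ∀ r : ℕ → Bool, ∃ i, (T i \ zset r).Finite := by
    intro r
    obtain ⟨i, hi⟩ := hcon _ (zset_infinite r)
    exact ⟨i, hi⟩
  choose I hI using key
  have hinjI : Function.Injective I := by
    intro r r' hrr
    by_contra hne
    have hzz := zset_inter_finite hne
    have h1 := hI r
    have h2 := hI r'
    rw [← hrr] at h2
    have hsub : T (I r) ⊆ (T (I r) \ zset r) ∪ ((T (I r) \ zset r') ∪ (zset r ∩ zset r')) := by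
      intro t ht
      by_cases h3 : t ∈ zset r
      · by_cases h4 : t ∈ zset r'
        · exact Or.inr (Or.inr ⟨h3, h4⟩)
        · exact Or.inr (Or.inl ⟨ht, h4⟩)
      · exact Or.inl ⟨ht, h3⟩
    exact hT (I r) ((h1.union (h2.union hzz)).subset hsub)
  have hle := Cardinal.mk_le_of_injective hinjI
  rw [mk_funBool] at hle
  exact absurd hle (not_le.2 hc)

private lemma exists_noconsec {A : Set ℕ} (hA : A.Infinite) :
    ∃ A' : Set ℕ, A' ⊆ A ∧ A'.Infinite ∧ ∀ m ∈ A', m + 1 ∉ A' := by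
  classical
  have hex : ∀ b : ℕ, ∃ a, a ∈ A ∧ b < a := by
    intro b
    obtain ⟨a, ha, hba⟩ := hA.exists_gt b
    exact ⟨a, ha, hba⟩
  obtain ⟨f, hfA, hgap⟩ : ∃ f : ℕ → ℕ, (∀ n, f n ∈ A) ∧ ∀ n, f n + 1 < f (n + 1) := by
    refine ⟨fun n => Nat.rec (hex 0).choose (fun _ prev => (hex (prev + 1)).choose) n, ?_, ?_⟩
    · intro n
      cases n with
      | zero => exact (hex 0).choose_spec.1
      | succ n => exact (hex (_ + 1)).choose_spec.1
    · intro n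
      exact (hex (_ + 1)).choose_spec.2
  have hmono : StrictMono f := strictMono_nat_of_lt_succ fun n => by have := hgap n; omega
  refine ⟨Set.range f, ?_, Set.infinite_range_of_injective hmono.injective, ?_⟩
  · rintro _ ⟨n, rfl⟩
    exact hfA n
  · rintro _ ⟨i, rfl⟩ hmem
    obtain ⟨jj, hjj⟩ := hmem
    rcases lt_trichotomy i jj with h | h | h
    · have h2 : f (i + 1) ≤ f jj := hmono.monotone (by omega)
      have := hgap i
      omega
    · subst h
      omega
    · have h2 : f (jj + 1) ≤ f i := hmono.monotone (by omega)
      have := hgap jj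
      omega

private lemma exists_avoid_thin {ι : Type} (T : ι → Set ℕ) (hc : #ι < Cardinal.continuum)
    (hT : ∀ i, (T i).Infinite) :
    ∃ A : Set ℕ, A.Infinite ∧ (∀ m ∈ A, m + 1 ∉ A) ∧ ∀ i, (T i \ A).Infinite := by
  obtain ⟨A0, hA0inf, hA0⟩ := exists_avoid T hc hT
  obtain ⟨A, hsub, hAinf, hnc⟩ := exists_noconsec hA0inf
  exact ⟨A, hAinf, hnc, fun i => (hA0 i).mono (Set.diff_subset_diff_right hsub)⟩

/-! ### The generic groupwise dense set omitting chosen points -/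

private lemma mainX {ι : Type} (x : ι → Set ℕ) (_hx : ∀ i, (x i).Infinite)
    (h : ∀ Q : IntervalPartition, ∃ A : Set ℕ, A.Infinite ∧
      ∀ i, ({m : ℕ | (x i ∩ Q.I m).Nonempty} \ A).Infinite) :
    GroupwiseDense {y : Set ℕ | y ∈ InfSets ∧ ∀ i, (x i \ y).Infinite} := by
  refine ⟨fun y hy => hy.1, ?_, ?_⟩
  · intro y hy z hz hfin
    refine ⟨hz, fun i => ?_⟩
    have hsub : x i \ y ⊆ (x i \ z) ∪ (z \ y) := by
      intro k hk
      by_cases hkz : k ∈ z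
      · exact Or.inr ⟨hkz, hk.2⟩
      · exact Or.inl ⟨hk.1, hkz⟩
    have hun : ((x i \ z) ∪ (z \ y)).Infinite := (hy.2 i).mono hsub
    by_contra hfin2
    rw [Set.not_infinite] at hfin2
    exact hun (hfin2.union hfin)
  · intro Q
    obtain ⟨A, hAinf, hAav⟩ := h Q
    exact ⟨A, hAinf, Q.biUnion_infinite hAinf, fun i => Q.diff_biUnion_infinite (hAav i)⟩

/-! ### bNum facts -/

private lemma bNum_le_continuum : bNum ≤ Cardinal.continuum := by
  apply csInf_le (OrderBot.bddBelow _)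
  refine ⟨Set.univ, ?_, fun g => ⟨g + 1, Set.mem_univ _, not_evMaj_succ_self g⟩⟩
  rw [Cardinal.mk_univ, mk_funNat]

private lemma bounded_of_lt_bNum {S : Set (ℕ → ℕ)} (h : #S < bNum) :
    ∃ g, ∀ f ∈ S, EvMaj f g := by
  by_contra hc
  push_neg at hc
  have hmem : #S ∈ {c : Cardinal | ∃ F : Set (ℕ → ℕ), #F = c ∧
      ∀ g : ℕ → ℕ, ∃ f ∈ F, ¬ EvMaj f g} := ⟨S, rfl, hc⟩
  exact absurd (csInf_le (OrderBot.bddBelow _) hmem) (not_le.2 h)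

/-! ### The dominating scale (used when 𝔟 = 𝔠) -/

private lemma exists_scale (hb : Cardinal.continuum ≤ bNum) :
    ∃ (r : (ℕ → ℕ) → (ℕ → ℕ) → Prop) (_ : IsWellOrder (ℕ → ℕ) r) (f : (ℕ → ℕ) → (ℕ → ℕ)),
      (∀ g k, k < f g k) ∧ (∀ g h, r h g → EvMaj (f h) (f g)) ∧
      (∀ g, EvMaj (g + 1) (f g)) ∧ ∀ g, #{h : ℕ → ℕ // r h g} < Cardinal.continuum := by
  classical
  obtain ⟨r, wo, hord⟩ := Cardinal.ord_eq (ℕ → ℕ)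
  haveI : IsWellOrder (ℕ → ℕ) r := wo
  have hseg : ∀ g, #{h : ℕ → ℕ // r h g} < Cardinal.continuum := by
    intro g
    have h1 := Cardinal.card_typein_lt g hord
    rw [mk_funNat] at h1; exact h1
  let F : ∀ _ : ℕ → ℕ, (∀ h : ℕ → ℕ, r h _ → (ℕ → ℕ)) → (ℕ → ℕ) := fun g IH => fun k =>
    max ((bounded_of_lt_bNum (S := Set.range fun p : {h : ℕ → ℕ // r h g} => IH p.1 p.2)
      (lt_of_le_of_lt Cardinal.mk_range_le (lt_of_lt_of_le (hseg g) hb))).choose k) (g k) + k + 1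
  let f : (ℕ → ℕ) → (ℕ → ℕ) := fun g => (IsWellFounded.wf (r := r)).fix F g
  have hfeq : ∀ g, f g = F g fun h _ => f h := fun g => WellFounded.fix_eq _ F g
  have key : ∀ g : ℕ → ℕ,
      (∀ k, k < f g k) ∧ (∀ h, r h g → EvMaj (f h) (f g)) ∧ EvMaj (g + 1) (f g) := by
    intro g
    have hS : #(Set.range fun p : {h : ℕ → ℕ // r h g} => f p.1) < bNum :=
      lt_of_le_of_lt Cardinal.mk_range_le (lt_of_lt_of_le (hseg g) hb)
    have hg2 : f g = fun k => max ((bounded_of_lt_bNum hS).choose k) (g k) + k + 1 := hfeq g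
    refine ⟨?_, ?_, ?_⟩
    · intro k
      simp only [hg2]
      exact Nat.lt_succ_of_le (Nat.le_add_left k _)
    · intro h hr
      have hmem : f h ∈ Set.range fun p : {h : ℕ → ℕ // r h g} => f p.1 := ⟨⟨h, hr⟩, rfl⟩
      have h1 := (bounded_of_lt_bNum hS).choose_spec (f h) hmem
      refine evMaj_trans h1 (evMaj_of_le fun k => ?_)
      simp only [hg2]
      exact le_trans (le_max_left _ _) (le_trans (Nat.le_add_right _ k) (Nat.le_succ _))
    · refine evMaj_of_le fun k => ?_
      simp only [hg2, Pi.add_apply, Pi.one_apply]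
      exact Nat.succ_le_succ (le_trans (le_max_right _ _) (Nat.le_add_right _ _))
  exact ⟨r, wo, f, fun g => (key g).1, fun g h hr => (key g).2.1 h hr,
    fun g => (key g).2.2, hseg⟩

end AuxStmt14
section MainStmt14

private lemma part1 {C : Set (Set (Set ℕ))} (hGD : ∀ G ∈ C, GroupwiseDense G)
    (hcof : ∀ X : Set (Set ℕ), GroupwiseDense X → ∃ G ∈ C, G ⊆ X) :
    Cardinal.continuum ≤ #C := by
  by_contra hlt
  push_neg at hlt
  have hpt : ∀ G : C, ∃ y, y ∈ (G : Set (Set ℕ)) := by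
    intro G
    obtain ⟨A, _, hU⟩ := (hGD G G.2).2.2 (⟨id, rfl, strictMono_id⟩ : IntervalPartition)
    exact ⟨_, hU⟩
  choose xg hxg using hpt
  have hxinf : ∀ G : C, (xg G).Infinite := fun G => (hGD G G.2).1 (hxg G)
  have hXgd := mainX xg hxinf (fun Q =>
    exists_avoid (fun G : C => {m : ℕ | (xg G ∩ Q.I m).Nonempty}) hlt
      (fun G => Q.meets_infinite (hxinf G)))
  obtain ⟨G, hGC, hsub⟩ := hcof _ hXgd
  have hmem := hsub (hxg ⟨G, hGC⟩)
  have h2 := hmem.2 ⟨G, hGC⟩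
  rw [Set.diff_self] at h2
  exact h2 Set.finite_empty

private lemma part2 {C : Set (Set (Set ℕ))} (hGD : ∀ G ∈ C, GroupwiseDense G)
    (hcof : ∀ X : Set (Set ℕ), GroupwiseDense X → ∃ G ∈ C, G ⊆ X)
    (hb : Cardinal.continuum ≤ bNum) (hC : #C ≤ Cardinal.continuum) : False := by
  classical
  obtain ⟨r, wo, f, hflt, hfmono, hfdom, hseg⟩ := exists_scale hb
  haveI : IsWellOrder (ℕ → ℕ) r := wo
  have hCle : #C ≤ #(ℕ → ℕ) := by rwa [mk_funNat]
  obtain ⟨j⟩ := Cardinal.le_def _ _ |>.mp hCle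
  have hPmono : ∀ G : C, StrictMono (fun n => (f (j G))^[n] 0) := by
    intro G
    apply strictMono_nat_of_lt_succ
    intro n
    rw [Function.iterate_succ_apply']
    exact hflt (j G) _
  let P : C → IntervalPartition := fun G => ⟨fun n => (f (j G))^[n] 0, rfl, hPmono G⟩
  have hsel : ∀ G : C, ∃ A : Set ℕ, A.Infinite ∧ (⋃ n ∈ A, (P G).I n) ∈ (G : Set (Set ℕ)) :=
    fun G => (hGD G G.2).2.2 (P G)
  choose B hBinf hBmem using hsel
  let x : C → Set ℕ := fun G => ⋃ n ∈ B G, (P G).I n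
  have hxinf : ∀ G : C, (x G).Infinite := fun G => (hGD G G.2).1 (hBmem G)
  have havoid : ∀ Q : IntervalPartition, ∃ A : Set ℕ, A.Infinite ∧
      ∀ G : C, ({m : ℕ | (x G ∩ Q.I m).Nonempty} \ A).Infinite := by
    intro Q
    set Fs : ℕ → ℕ := fun k => Q.e (idx Q k + 3) with hFs
    set D : Set (↥C) := {G : C | ¬ EvMaj (Fs + 1) (f (j G))} with hD
    have hDseg : ∀ G ∈ D, r (j G) Fs := by
      intro G hGmem
      rcases trichotomous_of r (j G) Fs with h1 | h1 | h1
      · exact h1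
      · exact absurd (h1 ▸ hfdom Fs) hGmem
      · exact absurd (evMaj_trans (hfdom Fs) (hfmono _ _ h1)) hGmem
    have hDcard : #D < Cardinal.continuum := by
      have hinj : Function.Injective
          (fun G : D => (⟨j G.1, hDseg G.1 G.2⟩ : {h : ℕ → ℕ // r h Fs})) := by
        intro G1 G2 hGe
        have h1 : j G1.1 = j G2.1 := congrArg Subtype.val hGe
        exact Subtype.ext (j.injective h1)
      exact lt_of_le_of_lt (Cardinal.mk_le_of_injective hinj) (hseg Fs)
    obtain ⟨A, hAinf, hAnc, hAav⟩ := exists_avoid_thin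
      (fun G : D => {m : ℕ | (x G.1 ∩ Q.I m).Nonempty}) hDcard
      (fun G => Q.meets_infinite (hxinf G.1))
    refine ⟨A, hAinf, fun G => ?_⟩
    by_cases hGmem : G ∈ D
    · exact hAav ⟨G, hGmem⟩
    · have hEv : EvMaj (Fs + 1) (f (j G)) := not_not.mp hGmem
      obtain ⟨K, hK⟩ := Filter.eventually_atTop.mp hEv
      apply Q.pairs_escape hAnc
      intro N
      obtain ⟨n, hnB, hge⟩ := (hBinf G).exists_gt (max K (Q.e N))
      set a : ℕ := (P G).e n with ha
      have han : n ≤ a := (P G).le_e n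
      have haK : K ≤ a := le_trans (le_trans (le_max_left _ _) (le_of_lt hge)) han
      have haN : Q.e N ≤ a := le_trans (le_trans (le_max_right _ _) (le_of_lt hge)) han
      have hlong : Q.e (idx Q a + 3) ≤ (P G).e (n + 1) := by
        have h1 : (P G).e (n + 1) = f (j G) a := by
          show (f (j G))^[n + 1] 0 = _
          rw [Function.iterate_succ_apply']
        have h2 := hK a haK
        simp only [Pi.add_apply, Pi.one_apply] at h2
        have h3 : Q.e (idx Q a + 3) = Fs a := rfl
        omega
      refine ⟨idx Q a + 1, ?_, ?_, ?_⟩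
      · have := Q.le_idx haN
        omega
      · intro k hk
        have hk2 := (Q.pair_subset hlong).1 hk
        rw [ha] at hk2
        exact Set.mem_biUnion hnB hk2
      · show Q.I (idx Q a + 2) ⊆ x G
        intro k hk
        have hk2 := (Q.pair_subset hlong).2 hk
        rw [ha] at hk2
        exact Set.mem_biUnion hnB hk2
  have hXgd := mainX x hxinf havoid
  obtain ⟨G, hGC, hsub⟩ := hcof _ hXgd
  have hmem := hsub (hBmem ⟨G, hGC⟩)
  have h2 := hmem.2 ⟨G, hGC⟩
  rw [Set.diff_self] at h2
  exact h2 Set.finite_empty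

end MainStmt14

/-- Theorem 5: cof(B_M⁺) ≥ 2^{ℵ₀} and cof(B_M⁺) > 𝔟. -/
theorem stmt14 : Cardinal.continuum ≤ cofBMplus ∧ bNum < cofBMplus := by
  have hne : {c : Cardinal | ∃ C : Set (Set (Set ℕ)), (∀ G ∈ C, GroupwiseDense G) ∧ #C = c ∧
      ∀ X : Set (Set ℕ), GroupwiseDense X → ∃ G ∈ C, G ⊆ X}.Nonempty :=
    ⟨#{X : Set (Set ℕ) | GroupwiseDense X}, {X : Set (Set ℕ) | GroupwiseDense X},
      fun G hG => hG, rfl, fun X hX => ⟨X, hX, subset_rfl⟩⟩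
  constructor
  · refine le_csInf hne ?_
    rintro c ⟨C, h1, rfl, h2⟩
    exact part1 h1 h2
  · obtain ⟨C, h1, hc, h2⟩ := csInf_mem hne
    have hlt : bNum < #C := by
      by_contra hle
      push_neg at hle
      rcases lt_or_ge bNum Cardinal.continuum with hbc | hbc
      · exact absurd (part1 h1 h2) (not_le.mpr (lt_of_le_of_lt hle hbc))
      · exact part2 h1 h2 hbc (le_trans hle bNum_le_continuum)
    rw [hc] at hlt
    exact hlt
end

section
/- Assume cov(L) = cof(L), where L is the σ-ideal of measure-zero subsets of 2^ω for the uniform product measure. Then there exist two downward-closed subsets X, Y of [ω]^ω, each of positive outer measure, such that X ∩ Y has measure zero. -/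
open Set Cardinal MeasureTheory

section S16aux
open Set MeasureTheory Finset
open scoped ENNReal
namespace S16

lemma chi_eq_true {u : Set ℕ} {i : ℕ} : chi u i = true ↔ i ∈ u := by
  simp [chi]



/-- Chernoff-style counting: weighted count of subsets. -/
lemma sum_pow_card (n tn td : ℕ) :
    ∑ B ∈ (Finset.range n).powerset, tn ^ B.card * td ^ (n - B.card) = (tn + td) ^ n := by
  classical
  have h := Finset.prod_add (fun _ : ℕ => tn) (fun _ : ℕ => td) (Finset.range n)
  simp only [Finset.prod_const] at h
  calc ∑ B ∈ (Finset.range n).powerset, tn ^ B.card * td ^ (n - B.card)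
      = ∑ B ∈ (Finset.range n).powerset, tn ^ B.card * td ^ ((Finset.range n) \ B).card := by
        refine Finset.sum_congr rfl fun B hB => ?_
        rw [Finset.mem_powerset] at hB
        rw [Finset.card_sdiff_of_subset hB, Finset.card_range]
    _ = (tn + td) ^ (Finset.range n).card := h.symm
    _ = (tn + td) ^ n := by rw [Finset.card_range]

lemma tail_count_le (n : ℕ) (tn td w : ℕ) (P : ℕ → Prop) [DecidablePred P]
    (hw : ∀ k ≤ n, P k → w ≤ tn ^ k * td ^ (n - k)) :
    ((Finset.range n).powerset.filter (fun B => P B.card)).card * w ≤ (tn + td) ^ n := by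
  classical
  calc ((Finset.range n).powerset.filter (fun B => P B.card)).card * w
      = ∑ _B ∈ (Finset.range n).powerset.filter (fun B => P B.card), w := by
        rw [Finset.sum_const, smul_eq_mul]
    _ ≤ ∑ B ∈ (Finset.range n).powerset.filter (fun B => P B.card),
          tn ^ B.card * td ^ (n - B.card) := by
        apply Finset.sum_le_sum
        intro B hB
        rw [Finset.mem_filter, Finset.mem_powerset] at hB
        exact hw B.card (le_trans (Finset.card_le_card hB.1) (le_of_eq (Finset.card_range n))) hB.2
    _ ≤ ∑ B ∈ (Finset.range n).powerset, tn ^ B.card * td ^ (n - B.card) :=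
        Finset.sum_le_sum_of_subset (Finset.filter_subset _ _)
    _ = (tn + td) ^ n := sum_pow_card n tn td

/-- upper-tail: #{B ⊆ range (8m) : 5m ≤ #B} * 2^(5m) ≤ 3^(8m) -/
lemma tail_up (m : ℕ) :
    (((Finset.range (8*m)).powerset.filter (fun B => 5*m ≤ B.card)).card) * 2 ^ (5*m)
      ≤ 3 ^ (8*m) := by
  have := tail_count_le (8*m) 2 1 (2 ^ (5*m)) (fun k => 5*m ≤ k) ?_
  · simpa using this
  · intro k _ hk
    calc (2:ℕ) ^ (5*m) ≤ 2 ^ k := Nat.pow_le_pow_right (by norm_num) hk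
      _ = 2 ^ k * 1 ^ (8*m - k) := by simp

/-- lower-tail: #{B ⊆ range (16m) : #B ≤ 7m} * (4^(7m) * 5^(9m)) ≤ 9^(16m) -/
lemma tail_low (m : ℕ) :
    (((Finset.range (16*m)).powerset.filter (fun B => B.card ≤ 7*m)).card) * (4 ^ (7*m) * 5 ^ (9*m))
      ≤ 9 ^ (16*m) := by
  have := tail_count_le (16*m) 4 5 (4 ^ (7*m) * 5 ^ (9*m)) (fun k => k ≤ 7*m) ?_
  · simpa using this
  · intro k hk hk7
    have h1 : (4:ℕ) ^ (7*m) = 4 ^ k * 4 ^ (7*m - k) := by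
      rw [← pow_add]; congr 1; omega
    have h2 : (4:ℕ) ^ (7*m - k) * 5 ^ (9*m) ≤ 5 ^ (7*m - k) * 5 ^ (9*m) :=
      Nat.mul_le_mul_right _ (Nat.pow_le_pow_left (by norm_num) _)
    calc (4:ℕ) ^ (7*m) * 5 ^ (9*m) = 4 ^ k * (4 ^ (7*m - k) * 5 ^ (9*m)) := by
          rw [h1]; ring
      _ ≤ 4 ^ k * (5 ^ (7*m - k) * 5 ^ (9*m)) := Nat.mul_le_mul_left _ h2
      _ = 4 ^ k * 5 ^ (16*m - k) := by rw [← pow_add]; congr 2; omega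

lemma ennreal_div_le {a b c d : ℕ} (hb : 0 < b) (hd : 0 < d) (h : a * d ≤ c * b) :
    (a : ℝ≥0∞) * ((b : ℕ) : ℝ≥0∞)⁻¹ ≤ (c : ℝ≥0∞) * ((d : ℕ) : ℝ≥0∞)⁻¹ := by
  have hbne : ((b:ℕ) : ℝ≥0∞) ≠ 0 := by exact_mod_cast hb.ne'
  have hbtop : ((b:ℕ) : ℝ≥0∞) ≠ ⊤ := ENNReal.natCast_ne_top b
  have hdne : ((d:ℕ) : ℝ≥0∞) ≠ 0 := by exact_mod_cast hd.ne'
  have hdtop : ((d:ℕ) : ℝ≥0∞) ≠ ⊤ := ENNReal.natCast_ne_top d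
  have hcast : (a : ℝ≥0∞) * (d : ℝ≥0∞) ≤ (c : ℝ≥0∞) * (b : ℝ≥0∞) := by exact_mod_cast h
  calc (a : ℝ≥0∞) * ((b : ℝ≥0∞))⁻¹
      = ((a : ℝ≥0∞) * (d : ℝ≥0∞)) * (((d : ℝ≥0∞))⁻¹ * ((b : ℝ≥0∞))⁻¹) := by
        rw [mul_assoc, ← mul_assoc (d : ℝ≥0∞), ENNReal.mul_inv_cancel hdne hdtop, one_mul]
    _ ≤ ((c : ℝ≥0∞) * (b : ℝ≥0∞)) * (((d : ℝ≥0∞))⁻¹ * ((b : ℝ≥0∞))⁻¹) := mul_le_mul_left hcast _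
    _ = (c : ℝ≥0∞) * ((d : ℝ≥0∞))⁻¹ := by
        rw [mul_comm ((d : ℝ≥0∞))⁻¹, mul_assoc, ← mul_assoc (b : ℝ≥0∞),
          ENNReal.mul_inv_cancel hbne hbtop, one_mul]


variable {μ : Measure (ℕ → Bool)}
  (hμ : ∀ (s : Finset ℕ) (f : ℕ → Bool),
      μ {y : ℕ → Bool | ∀ n ∈ s, y n = f n} = (1 / 2) ^ s.card)

include hμ

lemma mu_univ : μ Set.univ = 1 := by
  have := hμ ∅ (fun _ => true)
  simpa using this

lemma mu_singleton (p : ℕ → Bool) : μ {p} = 0 := by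
  have h : ∀ k : ℕ, μ {p} ≤ (1/2 : ℝ≥0∞) ^ k := by
    intro k
    have hsub : ({p} : Set (ℕ → Bool)) ⊆ {y | ∀ n ∈ Finset.range k, y n = p n} := by
      rintro q rfl; intro n _; rfl
    calc μ {p} ≤ μ {y | ∀ n ∈ Finset.range k, y n = p n} := measure_mono hsub
    _ = (1/2 : ℝ≥0∞) ^ (Finset.range k).card := hμ _ _
    _ = (1/2 : ℝ≥0∞) ^ k := by rw [Finset.card_range]
  have ht : Filter.Tendsto (fun k : ℕ => (1/2 : ℝ≥0∞) ^ k) Filter.atTop (nhds 0) :=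
    ENNReal.tendsto_pow_atTop_nhds_zero_of_lt_one (by norm_num)
  exact le_antisymm (ge_of_tendsto' ht h) zero_le

lemma mu_countable {S : Set (ℕ → Bool)} (hS : S.Countable) : μ S = 0 := by
  have : μ (⋃ p ∈ S, {p}) = 0 := by
    rw [measure_biUnion_null_iff hS]
    exact fun p _ => mu_singleton hμ p
  simpa [Set.biUnion_of_singleton] using this

/-- Main cylinder-counting bound. -/
lemma event_le (a : ℕ → ℕ) (ha : Function.Injective a) (n : ℕ)
    (P : ℕ → Prop) [DecidablePred P] :
    μ {p : ℕ → Bool | P ((Finset.range n).filter (fun j => p (a j) = true)).card}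
      ≤ (((Finset.range n).powerset.filter (fun B => P B.card)).card : ℝ≥0∞) * (1/2 : ℝ≥0∞) ^ n := by
  classical
  set s : Finset ℕ := (Finset.range n).image a with hs
  have hscard : s.card = n := by
    rw [hs, Finset.card_image_of_injective _ ha, Finset.card_range]
  set 𝒞 : Finset (Finset ℕ) := (Finset.range n).powerset.filter (fun B => P B.card) with hC
  have hsub : {p : ℕ → Bool | P ((Finset.range n).filter (fun j => p (a j) = true)).card}
      ⊆ ⋃ B ∈ 𝒞, {y : ℕ → Bool | ∀ i ∈ s, y i = (fun i => decide (∃ j ∈ B, a j = i)) i} := by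
    intro p hp
    set B : Finset ℕ := (Finset.range n).filter (fun j => p (a j) = true) with hB
    have hBmem : B ∈ 𝒞 := by
      rw [hC, Finset.mem_filter, Finset.mem_powerset]
      exact ⟨Finset.filter_subset _ _, hp⟩
    refine Set.mem_biUnion hBmem ?_
    intro i hi
    rw [hs, Finset.mem_image] at hi
    obtain ⟨j₀, hj₀, rfl⟩ := hi
    by_cases h : p (a j₀) = true
    · have : ∃ j ∈ B, a j = a j₀ := ⟨j₀, by rw [hB]; exact Finset.mem_filter.2 ⟨hj₀, h⟩, rfl⟩
      simp [h, this]
    · have : ¬ ∃ j ∈ B, a j = a j₀ := by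
        rintro ⟨j, hj, hjeq⟩
        rw [hB, Finset.mem_filter] at hj
        exact h (ha hjeq ▸ hj.2)
      simp only [Bool.not_eq_true] at h
      simp [h, this]
  calc μ _ ≤ μ (⋃ B ∈ 𝒞, {y : ℕ → Bool | ∀ i ∈ s, y i = (fun i => decide (∃ j ∈ B, a j = i)) i}) :=
        measure_mono hsub
    _ ≤ ∑ B ∈ 𝒞, μ {y : ℕ → Bool | ∀ i ∈ s, y i = (fun i => decide (∃ j ∈ B, a j = i)) i} :=
        measure_biUnion_finset_le _ _
    _ = ∑ _B ∈ 𝒞, (1/2 : ℝ≥0∞) ^ n := by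
        apply Finset.sum_congr rfl; intro B _; rw [hμ s _, hscard]
    _ = (𝒞.card : ℝ≥0∞) * (1/2 : ℝ≥0∞) ^ n := by
        rw [Finset.sum_const, nsmul_eq_mul]


/-- The "infinitely often dense along `a`" bad set. -/
def V (a : ℕ → ℕ) : Set (ℕ → Bool) :=
  {p | ∀ k, ∃ m, k ≤ m ∧ 5*m ≤ ((Finset.range (8*m)).filter (fun j => p (a j) = true)).card}

/-- The "eventually sparse" null set containing the intersection. -/
def W : Set (ℕ → Bool) :=
  {p | ∃ k, ∀ m, k ≤ m → ((Finset.range (16*m)).filter (fun i => p i = true)).card ≤ 7*m}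

lemma ev_up_bound (a : ℕ → ℕ) (ha : Function.Injective a) (m : ℕ) :
    μ {p : ℕ → Bool | 5*m ≤ ((Finset.range (8*m)).filter (fun j => p (a j) = true)).card}
      ≤ ((6561 : ℝ≥0∞)/8192) ^ m := by
  classical
  have h1 := event_le hμ a ha (8*m) (fun k => 5*m ≤ k)
  set c := (((Finset.range (8*m)).powerset.filter (fun B => 5*m ≤ B.card)).card) with hc
  have h2 : c * 2 ^ (5*m) ≤ 3 ^ (8*m) := tail_up m
  have key : (c : ℝ≥0∞) * (1/2 : ℝ≥0∞) ^ (8*m) ≤ ((6561 : ℝ≥0∞)/8192) ^ m := by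
    have e1 : (1/2 : ℝ≥0∞) ^ (8*m) = (((2 ^ (8*m) : ℕ) : ℝ≥0∞))⁻¹ := by
      rw [one_div, ← ENNReal.inv_pow]
      congr 1
      norm_cast
    have e2 : ((6561 : ℝ≥0∞)/8192) ^ m = ((6561 ^ m : ℕ) : ℝ≥0∞) * (((8192 ^ m : ℕ) : ℝ≥0∞))⁻¹ := by
      rw [ENNReal.div_eq_inv_mul, mul_comm, mul_pow, ← ENNReal.inv_pow]
      norm_cast
    rw [e1, e2]
    apply ennreal_div_le (Nat.pow_pos (by norm_num)) (Nat.pow_pos (by norm_num))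
    have e3 : (8192 : ℕ) ^ m = 2 ^ (5*m) * 2 ^ (8*m) := by
      rw [← pow_add, show 5*m+8*m = 13*m from by ring, pow_mul]
      norm_num
    have e4 : (6561 : ℕ) ^ m = 3 ^ (8*m) := by
      rw [pow_mul]
      norm_num
    calc c * 8192 ^ m = (c * 2 ^ (5*m)) * 2 ^ (8*m) := by rw [e3]; ring
      _ ≤ 3 ^ (8*m) * 2 ^ (8*m) := Nat.mul_le_mul_right _ h2
      _ = 6561 ^ m * 2 ^ (8*m) := by rw [e4]
  exact le_trans h1 key

lemma ev_low_bound (m : ℕ) :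
    μ {p : ℕ → Bool | ((Finset.range (16*m)).filter (fun i => p i = true)).card ≤ 7*m}
      ≤ ((1853020188851841 : ℝ≥0∞)/2097152000000000) ^ m := by
  classical
  have h1 := event_le hμ id (fun _ _ h => h) (16*m) (fun k => k ≤ 7*m)
  simp only [id] at h1
  set c := (((Finset.range (16*m)).powerset.filter (fun B => B.card ≤ 7*m)).card) with hc
  have h2 : c * (4 ^ (7*m) * 5 ^ (9*m)) ≤ 9 ^ (16*m) := tail_low m
  have key : (c : ℝ≥0∞) * (1/2 : ℝ≥0∞) ^ (16*m)
      ≤ ((1853020188851841 : ℝ≥0∞)/2097152000000000) ^ m := by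
    have e1 : (1/2 : ℝ≥0∞) ^ (16*m) = (((2 ^ (16*m) : ℕ) : ℝ≥0∞))⁻¹ := by
      rw [one_div, ← ENNReal.inv_pow]
      congr 1
      norm_cast
    have e2 : ((1853020188851841 : ℝ≥0∞)/2097152000000000) ^ m
        = (((1853020188851841 : ℕ) ^ m : ℕ) : ℝ≥0∞) * ((((2097152000000000 : ℕ) ^ m : ℕ) : ℝ≥0∞))⁻¹ := by
      rw [ENNReal.div_eq_inv_mul, mul_comm, mul_pow, ← ENNReal.inv_pow]
      norm_cast
    rw [e1, e2]
    apply ennreal_div_le (Nat.pow_pos (by norm_num)) (Nat.pow_pos (by norm_num))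
    have e3 : (2097152000000000 : ℕ) ^ m = (4 ^ (7*m) * 5 ^ (9*m)) * 2 ^ (16*m) := by
      rw [pow_mul, pow_mul, pow_mul, ← Nat.mul_pow, ← Nat.mul_pow]
      norm_num
    have e4 : (1853020188851841 : ℕ) ^ m = 9 ^ (16*m) := by
      rw [pow_mul]
      norm_num
    calc c * 2097152000000000 ^ m = (c * (4 ^ (7*m) * 5 ^ (9*m))) * 2 ^ (16*m) := by rw [e3]; ring
      _ ≤ 9 ^ (16*m) * 2 ^ (16*m) := Nat.mul_le_mul_right _ h2
      _ = 1853020188851841 ^ m * 2 ^ (16*m) := by rw [e4]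
  exact le_trans h1 key

omit hμ in
lemma null_io {E : ℕ → Set (ℕ → Bool)} {ρ : ℝ≥0∞} (hρ : ρ < 1) (hE : ∀ m, μ (E m) ≤ ρ ^ m) :
    μ {p | ∀ k, ∃ m, k ≤ m ∧ p ∈ E m} = 0 := by
  set T := {p | ∀ k, ∃ m, k ≤ m ∧ p ∈ E m} with hT
  have hbound : ∀ k, μ T ≤ ρ ^ k * (1 - ρ)⁻¹ := by
    intro k
    have hsub : T ⊆ ⋃ j : ℕ, E (k + j) := by
      intro p hp
      obtain ⟨m, hm, hmem⟩ := hp k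
      exact Set.mem_iUnion.2 ⟨m - k, by rwa [Nat.add_sub_cancel' hm]⟩
    calc μ T ≤ μ (⋃ j : ℕ, E (k + j)) := measure_mono hsub
      _ ≤ ∑' j : ℕ, μ (E (k + j)) := measure_iUnion_le _
      _ ≤ ∑' j : ℕ, ρ ^ (k + j) := ENNReal.tsum_le_tsum (fun j => hE _)
      _ = ρ ^ k * ∑' j : ℕ, ρ ^ j := by
          simp only [pow_add]
          rw [ENNReal.tsum_mul_left]
      _ = ρ ^ k * (1 - ρ)⁻¹ := by rw [ENNReal.tsum_geometric]
  have hconst : (1 - ρ)⁻¹ ≠ ⊤ := ENNReal.inv_ne_top.2 (tsub_pos_of_lt hρ).ne'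
  have ht : Filter.Tendsto (fun k : ℕ => ρ ^ k * (1 - ρ)⁻¹) Filter.atTop (nhds 0) := by
    have h0 : Filter.Tendsto (fun k : ℕ => ρ ^ k) Filter.atTop (nhds 0) :=
      ENNReal.tendsto_pow_atTop_nhds_zero_of_lt_one hρ
    have := ENNReal.Tendsto.mul_const h0 (Or.inr hconst)
    simpa using this
  exact le_antisymm (ge_of_tendsto' ht hbound) zero_le

omit hμ in
lemma null_ev {E : ℕ → Set (ℕ → Bool)} {ρ : ℝ≥0∞} (hρ : ρ < 1) (hE : ∀ m, μ (E m) ≤ ρ ^ m) :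
    μ {p | ∃ k, ∀ m, k ≤ m → p ∈ E m} = 0 := by
  have heq : {p : ℕ → Bool | ∃ k, ∀ m, k ≤ m → p ∈ E m}
      = ⋃ k : ℕ, {p | ∀ m, k ≤ m → p ∈ E m} := by
    ext p; simp [Set.mem_iUnion]
  rw [heq]
  apply measure_iUnion_null
  intro k
  have hbound : ∀ j : ℕ, μ {p | ∀ m, k ≤ m → p ∈ E m} ≤ ρ ^ k * ρ ^ j := by
    intro j
    calc μ {p | ∀ m, k ≤ m → p ∈ E m} ≤ μ (E (k + j)) :=
          measure_mono (fun p hp => hp (k + j) (Nat.le_add_right _ _))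
      _ ≤ ρ ^ (k + j) := hE _
      _ = ρ ^ k * ρ ^ j := pow_add ρ k j
  have ht : Filter.Tendsto (fun j : ℕ => ρ ^ k * ρ ^ j) Filter.atTop (nhds 0) := by
    have h0 : Filter.Tendsto (fun j : ℕ => ρ ^ j) Filter.atTop (nhds 0) :=
      ENNReal.tendsto_pow_atTop_nhds_zero_of_lt_one hρ
    have := ENNReal.Tendsto.const_mul (a := ρ ^ k) h0 (Or.inr (ENNReal.pow_ne_top hρ.ne_top))
    simpa using this
  exact le_antisymm (ge_of_tendsto' ht hbound) zero_le

lemma V_null (a : ℕ → ℕ) (ha : Function.Injective a) : μ (V a) = 0 := by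
  have hρ : ((6561 : ℝ≥0∞)/8192) < 1 := by
    rw [ENNReal.div_lt_iff (by norm_num) (by norm_num)]
    norm_num
  exact null_io (μ := μ) hρ (fun m => ev_up_bound hμ a ha m)

lemma W_null : μ W = 0 := by
  have hρ : ((1853020188851841 : ℝ≥0∞)/2097152000000000) < 1 := by
    rw [ENNReal.div_lt_iff (by norm_num) (by norm_num)]
    norm_num
  exact null_ev (μ := μ) hρ (fun m => ev_low_bound hμ m)

omit hμ

/-- number of elements of `u` below `n` -/
noncomputable def cnt (u : Set ℕ) (n : ℕ) : ℕ :=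
  ((Finset.range n).filter (fun i => chi u i = true)).card

lemma cnt_eq_count (u : Set ℕ) (n : ℕ) [DecidablePred (· ∈ u)] :
    cnt u n = Nat.count (· ∈ u) n := by
  rw [Nat.count_eq_card_filter_range]
  exact congrArg Finset.card (Finset.filter_congr (fun i _ => by simp [chi_eq_true]))

lemma inter_cnt (x y : Set ℕ) (hy : y.Infinite) (n : ℕ) :
    cnt (x ∩ y) n
      ≤ ((Finset.range (cnt y n)).filter (fun j => chi x (Nat.nth (· ∈ y) j) = true)).card := by
  classical
  apply Finset.card_le_card_of_injOn (fun a => Nat.count (· ∈ y) a)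
  · intro a ha
    rw [Finset.mem_coe, Finset.mem_filter, Finset.mem_range] at ha
    obtain ⟨han, hax⟩ := ha
    rw [chi_eq_true] at hax
    obtain ⟨hax', hay⟩ := hax
    rw [Finset.mem_coe, Finset.mem_filter, Finset.mem_range]
    refine ⟨?_, ?_⟩
    · rw [cnt_eq_count]
      calc Nat.count (· ∈ y) a < Nat.count (· ∈ y) (a + 1) := by
            rw [Nat.count_succ]; simp [hay]
        _ ≤ Nat.count (· ∈ y) n := Nat.count_monotone _ han
    · rw [Nat.nth_count hay, chi_eq_true]; exact hax'
  · intro a ha b hb heq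
    simp only [Finset.coe_filter, Set.mem_setOf_eq, Finset.mem_range] at ha hb
    have hay : a ∈ y := ((chi_eq_true).1 ha.2).2
    have hby : b ∈ y := ((chi_eq_true).1 hb.2).2
    simp only [] at heq
    have : Nat.nth (· ∈ y) (Nat.count (· ∈ y) a) = Nat.nth (· ∈ y) (Nat.count (· ∈ y) b) :=
      congrArg _ heq
    rwa [Nat.nth_count hay, Nat.nth_count hby] at this

lemma unfold_V {a : ℕ → ℕ} {p : ℕ → Bool} (h : p ∉ V a) :
    ∃ C, ∀ M, 8 * ((Finset.range M).filter (fun j => p (a j) = true)).card ≤ 5 * M + C := by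
  simp only [V, Set.mem_setOf_eq, not_forall] at h
  obtain ⟨k, hk⟩ := h
  push_neg at hk
  refine ⟨40 * (k + 1), fun M => ?_⟩
  set m := M / 8 + 1 + k with hm
  have hMm : M ≤ 8 * m := by omega
  have hkm : k ≤ m := by omega
  have hcard : ((Finset.range M).filter (fun j => p (a j) = true)).card
      ≤ ((Finset.range (8 * m)).filter (fun j => p (a j) = true)).card :=
    Finset.card_le_card (Finset.filter_subset_filter _ (by simpa using Finset.range_subset_range.2 hMm))
  have hlt := hk m hkm
  omega

lemma cnt_diff {w z : Set ℕ} (h : (w \ z).Finite) (n : ℕ) :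
    cnt w n ≤ cnt z n + h.toFinset.card := by
  classical
  have hsub : (Finset.range n).filter (fun i => chi w i = true)
      ⊆ ((Finset.range n).filter (fun i => chi z i = true)) ∪ h.toFinset := by
    intro i hi
    rw [Finset.mem_filter, chi_eq_true] at hi
    rw [Finset.mem_union]
    by_cases hz : i ∈ z
    · exact Or.inl (Finset.mem_filter.2 ⟨hi.1, chi_eq_true.2 hz⟩)
    · exact Or.inr (by rw [Set.Finite.mem_toFinset]; exact ⟨hi.2, hz⟩)
  calc cnt w n ≤ (((Finset.range n).filter (fun i => chi z i = true)) ∪ h.toFinset).card :=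
        Finset.card_le_card hsub
    _ ≤ cnt z n + h.toFinset.card := Finset.card_union_le _ _

lemma mem_W {w : Set ℕ} {C : ℕ} (h : ∀ n, 64 * cnt w n ≤ 25 * n + C) : chi w ∈ W := by
  refine ⟨C, fun m hm => ?_⟩
  have h16 := h (16 * m)
  show cnt w (16 * m) ≤ 7 * m
  omega

lemma small_inter {u v : Set ℕ} (hu : u.Infinite) {C1 C2 : ℕ}
    (h1 : ∀ n, 8 * cnt u n ≤ 5 * n + C1)
    (h2 : ∀ M, 8 * ((Finset.range M).filter
        (fun j => chi v (Nat.nth (· ∈ u) j) = true)).card ≤ 5 * M + C2) :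
    ∀ n, 64 * cnt (v ∩ u) n ≤ 25 * n + (5 * C1 + 8 * C2) := by
  intro n
  have ha := inter_cnt v u hu n
  have hb := h2 (cnt u n)
  have hc := h1 n
  omega


/-- points of Cantor space with finite support -/
def finSupp : Set (ℕ → Bool) := {p | {n | p n = true}.Finite}

lemma countable_finSupp : finSupp.Countable := by
  have hsub : finSupp ⊆ Set.range (fun s : Finset ℕ => (fun n => decide (n ∈ s) : ℕ → Bool)) := by
    intro p hp
    refine ⟨hp.toFinset, ?_⟩
    funext n
    by_cases h : p n = true
    · simp only [Set.Finite.mem_toFinset]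
      simp [h]
      exact (Set.Finite.mem_toFinset (hs := hp)).2 h
    · simp only [Set.Finite.mem_toFinset]
      simp only [Bool.not_eq_true] at h
      simp [h]
      exact fun hn => by simpa [h] using ((Set.Finite.mem_toFinset (hs := hp)).1 hn : p n = true)
  exact (Set.countable_range _).mono hsub

section Rec

variable {T : Type} [LinearOrder T] [WellFoundedLT T]

def bxc (N : T → Set (ℕ → Bool)) (t : T) (f : {s : T // s < t} → Set ℕ × Set ℕ) :
    ({s : T // s < t} ⊕ Unit) × Bool → Set (ℕ → Bool) :=
  fun i => match i with
  | (Sum.inl s, false) => N s.1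
  | (Sum.inl s, true) => V (Nat.nth (· ∈ (f s).2))
  | (Sum.inr _, false) => V id
  | (Sum.inr _, true) => finSupp

def BadX (N : T → Set (ℕ → Bool)) (t : T) (f : {s : T // s < t} → Set ℕ × Set ℕ) :
    Set (ℕ → Bool) := ⋃ i, bxc N t f i

def byc (N : T → Set (ℕ → Bool)) (t : T) (f : {s : T // s < t} → Set ℕ × Set ℕ) (x : Set ℕ) :
    (({s : T // s < t} ⊕ Unit) × Bool) ⊕ Unit → Set (ℕ → Bool) :=
  fun i => match i with
  | Sum.inl (Sum.inl s, false) => N s.1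
  | Sum.inl (Sum.inl s, true) => V (Nat.nth (· ∈ (f s).1))
  | Sum.inl (Sum.inr _, false) => V id
  | Sum.inl (Sum.inr _, true) => finSupp
  | Sum.inr _ => V (Nat.nth (· ∈ x))

def BadY (N : T → Set (ℕ → Bool)) (t : T) (f : {s : T // s < t} → Set ℕ × Set ℕ) (x : Set ℕ) :
    Set (ℕ → Bool) := ⋃ i, byc N t f x i

noncomputable def step (N : T → Set (ℕ → Bool)) (t : T)
    (f : {s : T // s < t} → Set ℕ × Set ℕ) : Set ℕ × Set ℕ :=
  ({n | Classical.epsilon (fun p : ℕ → Bool => p ∉ BadX N t f) n = true},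
   {n | Classical.epsilon (fun q : ℕ → Bool =>
      q ∉ BadY N t f {n | Classical.epsilon (fun p : ℕ → Bool => p ∉ BadX N t f) n = true}) n = true})

noncomputable def seq (N : T → Set (ℕ → Bool)) : T → Set ℕ × Set ℕ :=
  WellFounded.fix wellFounded_lt (fun t prev => step N t (fun s => prev s.1 s.2))

lemma seq_eq (N : T → Set (ℕ → Bool)) (t : T) :
    seq N t = step N t (fun s => seq N s.1) :=
  WellFounded.fix_eq _ _ _

end Rec
end S16

end S16aux

/-- Assuming cov(L) = cof(L) for the null ideal `L` of the uniform product measure `μ`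
on `2^ω`, there are downward-closed `X, Y ⊆ [ω]^ω` of positive outer measure with
`X ∩ Y` of measure zero. -/
theorem stmt16 (μ : Measure (ℕ → Bool))
    (hμ : ∀ (s : Finset ℕ) (f : ℕ → Bool),
      μ {y : ℕ → Bool | ∀ n ∈ s, y n = f n} = (1 / 2) ^ s.card)
    (hcovcof :
      sInf {c : Cardinal | ∃ S : Set (Set (ℕ → Bool)), (∀ A ∈ S, μ A = 0) ∧ #S = c ∧
          ⋃₀ S = Set.univ} =
      sInf {c : Cardinal | ∃ C : Set (Set (ℕ → Bool)), (∀ A ∈ C, μ A = 0) ∧ #C = c ∧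
          ∀ A : Set (ℕ → Bool), μ A = 0 → ∃ B ∈ C, A ⊆ B}) :
    ∃ X Y : Set (Set ℕ), X ⊆ InfSets ∧ Y ⊆ InfSets ∧ DownClosed X ∧ DownClosed Y ∧
      μ (chi '' X) ≠ 0 ∧ μ (chi '' Y) ≠ 0 ∧ μ (chi '' (X ∩ Y)) = 0 := by
  classical
  set Cov := {c : Cardinal | ∃ S : Set (Set (ℕ → Bool)), (∀ A ∈ S, μ A = 0) ∧ #S = c ∧
      ⋃₀ S = Set.univ} with hCovDef
  set Cof := {c : Cardinal | ∃ C : Set (Set (ℕ → Bool)), (∀ A ∈ C, μ A = 0) ∧ #C = c ∧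
      ∀ A : Set (ℕ → Bool), μ A = 0 → ∃ B ∈ C, A ⊆ B} with hCofDef
  set K := sInf Cov with hKdef
  -- Cov is nonempty (singletons cover)
  have CovNE : Cov.Nonempty := by
    refine ⟨#(Set.range fun p : ℕ → Bool => ({p} : Set (ℕ → Bool))),
      Set.range fun p : ℕ → Bool => ({p} : Set (ℕ → Bool)), ?_, rfl, ?_⟩
    · rintro A ⟨p, rfl⟩
      exact S16.mu_singleton hμ p
    · rw [Set.sUnion_range]
      exact Set.iUnion_of_singleton _
  have CofNE : Cof.Nonempty :=
    ⟨#{A : Set (ℕ → Bool) | μ A = 0}, {A | μ A = 0}, fun A hA => hA, rfl,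
      fun A hA => ⟨A, hA, subset_rfl⟩⟩
  have hKCov : K ∈ Cov := csInf_mem CovNE
  have hKinf : ℵ₀ < K := by
    by_contra hle
    push_neg at hle
    obtain ⟨S, hSnull, hScard, hScover⟩ := hKCov
    have hcnt : S.Countable := by
      rw [← Cardinal.le_aleph0_iff_set_countable, hScard]
      exact hle
    have hnull : μ (⋃₀ S) = 0 := by
      rw [Set.sUnion_eq_biUnion]
      exact (measure_biUnion_null_iff hcnt).2 hSnull
    rw [hScover, S16.mu_univ hμ] at hnull
    exact one_ne_zero hnull
  have hKCof : K ∈ Cof := by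
    rw [hcovcof]
    exact csInf_mem CofNE
  obtain ⟨C, hCnull, hCcard, hCcof⟩ := hKCof
  -- lower bound: fewer than K null sets cannot cover
  have LB : ∀ (ι : Type) (g : ι → Set (ℕ → Bool)), #ι < K → (∀ i, μ (g i) = 0) →
      (⋃ i, g i) ≠ Set.univ := by
    intro ι g hlt hnull huniv
    have hmem : #(Set.range g) ∈ Cov := by
      refine ⟨Set.range g, ?_, rfl, ?_⟩
      · rintro A ⟨i, rfl⟩; exact hnull i
      · rwa [Set.sUnion_range]
    exact absurd ((csInf_le' hmem).trans Cardinal.mk_range_le) (not_le.2 hlt)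
  -- enumerate the cofinal family along `T`
  obtain ⟨e⟩ : Nonempty (K.ord.ToType ≃ ↥C) := by
    rw [← Cardinal.eq, Cardinal.mk_ord_toType, hCcard]
  set N : K.ord.ToType → Set (ℕ → Bool) := fun t => (e t : Set (ℕ → Bool)) with hNdef
  have hNnull : ∀ t, μ (N t) = 0 := fun t => hCnull _ (e t).2
  have hNcof : ∀ A : Set (ℕ → Bool), μ A = 0 → ∃ t, A ⊆ N t := by
    intro A hA
    obtain ⟨B, hB, hAB⟩ := hCcof A hA
    refine ⟨e.symm ⟨B, hB⟩, ?_⟩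
    rw [hNdef]
    simpa [Equiv.apply_symm_apply] using hAB
  -- size of the bad index sets
  have hIio : ∀ t : K.ord.ToType, #{s : K.ord.ToType // s < t} < K := by
    intro t
    exact Cardinal.mk_Iio_toType_ord_lt t
  have hidx1 : ∀ t : K.ord.ToType, #(({s : K.ord.ToType // s < t} ⊕ Unit) × Bool) < K := by
    intro t
    have h2 : #({s : K.ord.ToType // s < t} ⊕ Unit) < K := by
      rw [Cardinal.mk_sum]
      simp only [Cardinal.lift_id, Cardinal.mk_fintype, Fintype.card_unit, Nat.cast_one]
      exact Cardinal.add_lt_of_lt hKinf.le (hIio t) (lt_trans Cardinal.one_lt_aleph0 hKinf)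
    rw [Cardinal.mk_prod]
    simp only [Cardinal.lift_id, Cardinal.mk_fintype, Fintype.card_bool, Nat.cast_ofNat]
    exact Cardinal.mul_lt_of_lt hKinf.le h2
      (lt_trans (Cardinal.nat_lt_aleph0 2) hKinf)
  have hidx2 : ∀ t : K.ord.ToType,
      #((({s : K.ord.ToType // s < t} ⊕ Unit) × Bool) ⊕ Unit) < K := by
    intro t
    rw [Cardinal.mk_sum]
    simp only [Cardinal.lift_id, Cardinal.mk_fintype, Fintype.card_unit, Nat.cast_one]
    exact Cardinal.add_lt_of_lt hKinf.le (hidx1 t) (lt_trans Cardinal.one_lt_aleph0 hKinf)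
  -- the recursive construction is "good" at every stage
  have good : ∀ t : K.ord.ToType,
      ((S16.seq N t).1).Infinite ∧ ((S16.seq N t).2).Infinite ∧
      chi (S16.seq N t).1 ∉ S16.BadX N t (fun s => S16.seq N s.1) ∧
      chi (S16.seq N t).2 ∉ S16.BadY N t (fun s => S16.seq N s.1) (S16.seq N t).1 := by
    intro t
    induction t using WellFoundedLT.induction with
    | _ t IH =>
    set f : {s : K.ord.ToType // s < t} → Set ℕ × Set ℕ := fun s => S16.seq N s.1 with hf
    -- all components of BadX are null
    have hbxnull : ∀ i, μ (S16.bxc N t f i) = 0 := by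
      rintro ⟨s | u, b⟩
      · cases b
        · exact hNnull s.1
        · exact S16.V_null hμ _ (Nat.nth_injective (by simpa using (IH s.1 s.2).2.1))
      · cases b
        · exact S16.V_null hμ id (fun _ _ h => h)
        · exact S16.mu_countable hμ S16.countable_finSupp
    have hexX : ∃ p : ℕ → Bool, p ∉ S16.BadX N t f := by
      rw [← Set.ne_univ_iff_exists_notMem]
      exact LB _ _ (hidx1 t) hbxnull
    have hpX := Classical.epsilon_spec hexX
    have hx1 : (S16.seq N t).1
        = {n | Classical.epsilon (fun p : ℕ → Bool => p ∉ S16.BadX N t f) n = true} := by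
      rw [S16.seq_eq, ← hf]
      rfl
    have hchiX : chi (S16.seq N t).1
        = Classical.epsilon (fun p : ℕ → Bool => p ∉ S16.BadX N t f) := by
      funext n
      by_cases h : Classical.epsilon (fun p : ℕ → Bool => p ∉ S16.BadX N t f) n = true
      · simp [chi, hx1, h]
      · simp only [Bool.not_eq_true] at h
        simp [chi, hx1, h]
    have hxInf : ((S16.seq N t).1).Infinite := by
      rw [hx1]
      intro hfin
      exact hpX (Set.mem_iUnion.2 ⟨(Sum.inr (), true), hfin⟩)
    have hxgood : chi (S16.seq N t).1 ∉ S16.BadX N t f := by rw [hchiX]; exact hpX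
    -- now the y-part
    have hbynull : ∀ i, μ (S16.byc N t f (S16.seq N t).1 i) = 0 := by
      rintro (⟨s | u, b⟩ | u)
      · cases b
        · exact hNnull s.1
        · exact S16.V_null hμ _ (Nat.nth_injective (by simpa using (IH s.1 s.2).1))
      · cases b
        · exact S16.V_null hμ id (fun _ _ h => h)
        · exact S16.mu_countable hμ S16.countable_finSupp
      · exact S16.V_null hμ _ (Nat.nth_injective (by simpa using hxInf))
    have hexY : ∃ q : ℕ → Bool, q ∉ S16.BadY N t f (S16.seq N t).1 := by
      rw [← Set.ne_univ_iff_exists_notMem]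
      exact LB _ _ (hidx2 t) hbynull
    have hpY := Classical.epsilon_spec hexY
    have hy0 : (S16.seq N t).2
        = {n | Classical.epsilon
            (fun q : ℕ → Bool => q ∉ S16.BadY N t f
              {n | Classical.epsilon (fun p : ℕ → Bool => p ∉ S16.BadX N t f) n = true}) n
            = true} := by
      rw [S16.seq_eq, ← hf]
      rfl
    have hy1 : (S16.seq N t).2
        = {n | Classical.epsilon
            (fun q : ℕ → Bool => q ∉ S16.BadY N t f (S16.seq N t).1) n = true} := by
      rw [hx1]
      exact hy0
    have hchiY : chi (S16.seq N t).2
        = Classical.epsilon (fun q : ℕ → Bool => q ∉ S16.BadY N t f (S16.seq N t).1) := by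
      funext n
      by_cases h : Classical.epsilon
          (fun q : ℕ → Bool => q ∉ S16.BadY N t f (S16.seq N t).1) n = true
      · simp [chi, hy1, h]
      · simp only [Bool.not_eq_true] at h
        simp [chi, hy1, h]
    have hyInf : ((S16.seq N t).2).Infinite := by
      rw [hy1]
      intro hfin
      exact hpY (Set.mem_iUnion.2 ⟨Sum.inl (Sum.inr (), true), hfin⟩)
    have hygood : chi (S16.seq N t).2 ∉ S16.BadY N t f (S16.seq N t).1 := by
      rw [hchiY]; exact hpY
    exact ⟨hxInf, hyInf, hxgood, hygood⟩
  -- the two families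
  haveI : NoMaxOrder K.ord.ToType := Cardinal.noMaxOrder hKinf.le
  set X : Set (Set ℕ) :=
    {w : Set ℕ | w.Infinite ∧ ∃ t : K.ord.ToType, (w \ (S16.seq N t).1).Finite} with hXdef
  set Y : Set (Set ℕ) :=
    {w : Set ℕ | w.Infinite ∧ ∃ t : K.ord.ToType, (w \ (S16.seq N t).2).Finite} with hYdef
  have hXInf : X ⊆ InfSets := fun w hw => hw.1
  have hYInf : Y ⊆ InfSets := fun w hw => hw.1
  have hXdc : DownClosed X := by
    rintro y ⟨hyInf, t, hyt⟩ x hxInf hxy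
    refine ⟨hxInf, t, ?_⟩
    refine ((hxy.union hyt).subset ?_)
    intro a ⟨hax, hat⟩
    by_cases hay : a ∈ y
    · exact Or.inr ⟨hay, hat⟩
    · exact Or.inl ⟨hax, hay⟩
  have hYdc : DownClosed Y := by
    rintro y ⟨hyInf, t, hyt⟩ x hxInf hxy
    refine ⟨hxInf, t, ?_⟩
    refine ((hxy.union hyt).subset ?_)
    intro a ⟨hax, hat⟩
    by_cases hay : a ∈ y
    · exact Or.inr ⟨hay, hat⟩
    · exact Or.inl ⟨hax, hay⟩
  -- positivity of outer measure via diagonalization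
  have hXpos : μ (chi '' X) ≠ 0 := by
    intro h0
    obtain ⟨t0, hsub⟩ := hNcof _ h0
    obtain ⟨t1, ht1⟩ := exists_gt t0
    have hmem : chi (S16.seq N t1).1 ∈ chi '' X :=
      ⟨(S16.seq N t1).1, ⟨(good t1).1, t1, by simp⟩, rfl⟩
    have hinN : chi (S16.seq N t1).1 ∈ N t0 := hsub hmem
    exact (good t1).2.2.1
      (Set.mem_iUnion.2 ⟨(Sum.inl ⟨t0, ht1⟩, false), hinN⟩)
  have hYpos : μ (chi '' Y) ≠ 0 := by
    intro h0
    obtain ⟨t0, hsub⟩ := hNcof _ h0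
    obtain ⟨t1, ht1⟩ := exists_gt t0
    have hmem : chi (S16.seq N t1).2 ∈ chi '' Y :=
      ⟨(S16.seq N t1).2, ⟨(good t1).2.1, t1, by simp⟩, rfl⟩
    have hinN : chi (S16.seq N t1).2 ∈ N t0 := hsub hmem
    exact (good t1).2.2.2
      (Set.mem_iUnion.2 ⟨Sum.inl (Sum.inl ⟨t0, ht1⟩, false), hinN⟩)
  -- the intersection is contained in the null set W
  have hXY : chi '' (X ∩ Y) ⊆ S16.W := by
    rintro _ ⟨w, ⟨⟨hwInf, s, hws⟩, ⟨-, t, hwt⟩⟩, rfl⟩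
    set xs := (S16.seq N s).1 with hxs
    set yt := (S16.seq N t).2 with hyt'
    have hdiff : (w \ (yt ∩ xs)).Finite := by
      rw [Set.diff_inter]
      exact hwt.union hws
    -- key density bounds, by cases on the order of s and t
    have key : ∃ C3, ∀ n, 64 * S16.cnt (yt ∩ xs) n ≤ 25 * n + C3 ∨
        64 * S16.cnt (xs ∩ yt) n ≤ 25 * n + C3 := by
      rcases le_or_gt s t with hst | hts
      · -- u = xs, v = yt : yt avoids V (nth xs)
        have hxU : chi xs ∉ S16.V id := fun hmem =>
          (good s).2.2.1 (Set.mem_iUnion.2 ⟨(Sum.inr (), false), hmem⟩)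
        have hyV : chi yt ∉ S16.V (Nat.nth (· ∈ xs)) := by
          rcases eq_or_lt_of_le hst with heq | hlt
          · exact fun hmem => (good t).2.2.2 (Set.mem_iUnion.2
              ⟨Sum.inr (), by rw [hxs, heq] at hmem; exact hmem⟩)
          · exact fun hmem => (good t).2.2.2
              (Set.mem_iUnion.2 ⟨Sum.inl (Sum.inl ⟨s, hlt⟩, true), hmem⟩)
        obtain ⟨C1, h1⟩ := S16.unfold_V hxU
        obtain ⟨C2, h2⟩ := S16.unfold_V hyV
        have h1' : ∀ n, 8 * S16.cnt xs n ≤ 5 * n + C1 := by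
          intro n
          have := h1 n
          simpa [S16.cnt, id] using this
        refine ⟨5 * C1 + 8 * C2, fun n => Or.inl ?_⟩
        exact S16.small_inter (good s).1 h1' h2 n
      · -- t < s : u = yt, v = xs : xs avoids V (nth yt)
        have hyU : chi yt ∉ S16.V id := fun hmem =>
          (good t).2.2.2 (Set.mem_iUnion.2 ⟨Sum.inl (Sum.inr (), false), hmem⟩)
        have hxV : chi xs ∉ S16.V (Nat.nth (· ∈ yt)) := fun hmem =>
          (good s).2.2.1 (Set.mem_iUnion.2 ⟨(Sum.inl ⟨t, hts⟩, true), hmem⟩)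
        obtain ⟨C1, h1⟩ := S16.unfold_V hyU
        obtain ⟨C2, h2⟩ := S16.unfold_V hxV
        have h1' : ∀ n, 8 * S16.cnt yt n ≤ 5 * n + C1 := by
          intro n
          have := h1 n
          simpa [S16.cnt, id] using this
        refine ⟨5 * C1 + 8 * C2, fun n => Or.inr ?_⟩
        exact S16.small_inter (good t).2.1 h1' h2 n
    obtain ⟨C3, hC3⟩ := key
    have hcntw : ∀ n, 64 * S16.cnt w n ≤ 25 * n + (C3 + 64 * hdiff.toFinset.card) := by
      intro n
      have hd := S16.cnt_diff hdiff n
      have hd' : S16.cnt (yt ∩ xs) n = S16.cnt (xs ∩ yt) n := by rw [Set.inter_comm]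
      rcases hC3 n with h | h <;> omega
    exact S16.mem_W hcntw
  have hXYnull : μ (chi '' (X ∩ Y)) = 0 :=
    measure_mono_null hXY (S16.W_null hμ)
  exact ⟨X, Y, hXInf, hYInf, hXdc, hYdc, hXpos, hYpos, hXYnull⟩
end
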